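/- arXiv:2507.06896 — 9 statements merged into one kernel-verified Lean document; each statement's English description precedes it below -/
import Mathlib

section
/- Let Σ be a finite alphabet and let θ : ℤ → R be a rule distribution over a finite set R of local rules of radius at most r, defining a non-uniform cellular automaton H_θ : Σ^ℤ → Σ^ℤ. If θ is uniformly recurrent (every finite pattern occurring in θ occurs syndetically, i.e., with bounded gaps) and H_θ is injective, then for every rule distribution φ in the orbit closure of θ under the shift, the non-uniform cellular automaton H_φ is injective (i.e., H_θ is stably injective). -/
open Function

/-- `f` is a local rule of radius (at most) `r`: it only depends on coordinates in `[-r, r]`. -/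
def IsLocalRule {A : Type*} (r : ℕ) (f : (ℤ → A) → A) : Prop :=
  ∀ u v : ℤ → A, (∀ i : ℤ, -(r : ℤ) ≤ i → i ≤ (r : ℤ) → u i = v i) → f u = f v

/-- The global map of the non-uniform cellular automaton with rule distribution `θ`. -/
def nuca {A : Type*} (θ : ℤ → ((ℤ → A) → A)) (c : ℤ → A) : ℤ → A :=
  fun x => θ x (fun i => c (x + i))

/-- A configuration `θ : ℤ → R` is (spatially) recurrent: every finite pattern
occurs in some other (translated) position. -/
def Recurrent {R : Type*} (θ : ℤ → R) : Prop :=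
  ∀ (a : ℤ) (m : ℕ), ∃ k : ℤ, k ≠ 0 ∧ ∀ i : ℕ, i < m → θ (a + k + i) = θ (a + i)

/-- A configuration `θ : ℤ → R` is (spatially) uniformly recurrent: every finite pattern
occurs with bounded gaps. -/
def UnifRecurrent {R : Type*} (θ : ℤ → R) : Prop :=
  ∀ (a : ℤ) (m : ℕ), ∃ n : ℕ, ∀ x : ℤ, ∃ k : ℤ, x ≤ k ∧ k ≤ x + (n : ℤ) ∧
    ∀ i : ℕ, i < m → θ (k + i) = θ (a + i)

/-- `φ` lies in the orbit closure of `θ` under the shift (combinatorial characterization: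
every finite pattern of `φ` occurs in `θ`). -/
def InOrbitClosure {R : Type*} (φ θ : ℤ → R) : Prop :=
  ∀ (a : ℤ) (m : ℕ), ∃ k : ℤ, ∀ i : ℕ, i < m → φ (a + i) = θ (a + k + i)

/-- The radius-`r` neighbourhood of a finite domain `D`. -/
noncomputable def nbhd (r : ℕ) (D : Finset ℤ) : Finset ℤ :=
  D.biUnion (fun x => Finset.Icc (x - (r : ℤ)) (x + (r : ℤ)))

/-- A NUCA (with radius-`r` rules) is balanced: every pattern on a finite domain `D` has
exactly `|Σ|^(|N(D)|-|D|)` preimage patterns on the neighbourhood `N(D)`. -/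
def NucaBalanced {A : Type*} [Fintype A] (r : ℕ) (θ : ℤ → ((ℤ → A) → A)) : Prop :=
  ∀ (D : Finset ℤ) (p : ℤ → A),
    Nat.card {q : { y : ℤ // y ∈ nbhd r D } → A //
      ∀ c : ℤ → A, (∀ i : { y : ℤ // y ∈ nbhd r D }, c i.1 = q i) →
        ∀ x ∈ D, nuca θ c x = p x} =
      Fintype.card A ^ ((nbhd r D).card - D.card)

/-- `c` is an equicontinuity point of the NUCA `θ`. -/
def EqPt {A : Type*} (θ : ℤ → ((ℤ → A) → A)) (c : ℤ → A) : Prop :=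
  ∀ E : Finset ℤ, ∃ D : Finset ℤ, ∀ e : ℤ → A, (∀ x ∈ D, e x = c x) →
    ∀ n : ℕ, 1 ≤ n → ∀ x ∈ E, (nuca θ)^[n] e x = (nuca θ)^[n] c x

/-- The NUCA `θ` is sensitive to initial conditions. -/
def Sensitive {A : Type*} (θ : ℤ → ((ℤ → A) → A)) : Prop :=
  ∃ E : Finset ℤ, ∀ c : ℤ → A, ∀ D : Finset ℤ, ∃ e : ℤ → A,
    (∀ x ∈ D, e x = c x) ∧ ∃ n : ℕ, 1 ≤ n ∧ ∃ x ∈ E, (nuca θ)^[n] e x ≠ (nuca θ)^[n] c x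


lemma ultra_pigeon {B : Type*} [Finite B] (U : Ultrafilter ℕ) (g : ℕ → B) :
    ∃ b : B, {n | g n = b} ∈ U := by
  by_contra h
  push_neg at h
  have h' : ∀ b : B, {n | g n = b}ᶜ ∈ U := fun b =>
    Ultrafilter.compl_mem_iff_notMem.2 (h b)
  have h2 : (⋂ b : B, {n | g n = b}ᶜ) ∈ U := Filter.iInter_mem.2 h'
  have hne : (⋂ b : B, {n | g n = b}ᶜ) = (∅ : Set ℕ) := by ext n; simp
  rw [hne] at h2
  exact Filter.empty_notMem (U : Filter ℕ) h2


/-- Stable injectivity: an injective NUCA with a uniformly recurrent rule distribution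
(finite rule set of radius-at-most-`r` rules, finite alphabet) has every member of the
orbit closure of its rule distribution also defining an injective NUCA. -/
theorem stmt_1 {A : Type*} [Finite A] (r : ℕ) (θ : ℤ → ((ℤ → A) → A))
    (hfin : (Set.range θ).Finite) (hloc : ∀ x, IsLocalRule r (θ x))
    (hrec : UnifRecurrent θ) (hinj : Function.Injective (nuca θ)) :
    ∀ φ : ℤ → ((ℤ → A) → A), InOrbitClosure φ θ → Function.Injective (nuca φ) := by
  intro φ hφ
  -- every φ-pattern occurs in θ, interval form
  have pat : ∀ a b : ℤ, ∃ k : ℤ, ∀ j : ℤ, a ≤ j → j ≤ b → φ j = θ (j + k) := by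
    intro a b
    obtain ⟨k, hk⟩ := hφ a (b - a + 1).toNat
    refine ⟨k, fun j h1 h2 => ?_⟩
    have h4 : (j - a).toNat < (b - a + 1).toNat := by omega
    have h5 := hk _ h4
    have h3 : ((j - a).toNat : ℤ) = j - a := Int.toNat_of_nonneg (by omega)
    rw [h3] at h5
    rw [show a + (j - a) = j from by ring, show a + k + (j - a) = j + k from by ring] at h5
    exact h5
  -- every θ-pattern occurs syndetically in φ
  have synd : ∀ a b : ℤ, ∃ N : ℕ, ∀ x : ℤ, ∃ t : ℤ, x ≤ t ∧ t ≤ x + (N : ℤ) ∧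
      ∀ j : ℤ, a ≤ j → j ≤ b → φ (t + j) = θ j := by
    intro a b
    obtain ⟨N, hN⟩ := hrec a (b - a + 1).toNat
    refine ⟨N, fun x => ?_⟩
    obtain ⟨k, hk⟩ := pat (x + a) (x + a + N + (b - a))
    obtain ⟨k', h1, h2, h3⟩ := hN (x + a + k)
    refine ⟨k' - k - a, by omega, by omega, fun j hj1 hj2 => ?_⟩
    have e1 : φ (k' - k - a + j) = θ (k' - k - a + j + k) := hk _ (by omega) (by omega)
    have h4 : (j - a).toNat < (b - a + 1).toNat := by omega
    have e2 := h3 _ h4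
    have h5 : ((j - a).toNat : ℤ) = j - a := Int.toNat_of_nonneg (by omega)
    rw [h5] at e2
    rw [show k' - k - a + j + k = k' + (j - a) from by ring] at e1
    rw [show a + (j - a) = j from by ring] at e2
    rw [e1, e2]
  -- main argument
  intro c d hcd
  by_contra hne0
  have hne : ∃ y, c y ≠ d y := by
    by_contra h; push_neg at h; exact hne0 (funext h)
  obtain ⟨y0, hy0⟩ := hne
  -- the half-line case, abstract form
  have caseHalf : (∀ n : ℕ, ∃ p : ℤ,
      (∃ i : ℤ, p - (r : ℤ) ≤ i ∧ i ≤ p + (r : ℤ) ∧ c i ≠ d i) ∧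
      (∀ j : ℤ, -(n : ℤ) ≤ j → j ≤ (n : ℤ) → φ (p + j) = θ j)) → False := by
    intro h2
    choose P hdiff hmatch using h2
    set U : Ultrafilter ℕ := Ultrafilter.of Filter.atTop with hUdef
    have hU : ∀ m : ℕ, {n : ℕ | m ≤ n} ∈ U := fun m =>
      Ultrafilter.of_le (Filter.atTop : Filter ℕ) (Filter.mem_atTop m)
    have pig : ∀ g : ℕ → A, ∃ a : A, {n | g n = a} ∈ U := fun g => ultra_pigeon U g
    choose lim hlim using pig
    set e : ℕ → ℤ → A := fun n x => c (P n + x) with he_def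
    set f : ℕ → ℤ → A := fun n x => d (P n + x) with hf_def
    set e' : ℤ → A := fun x => lim (fun n => e n x) with he'_def
    set f' : ℤ → A := fun x => lim (fun n => f n x) with hf'_def
    have key : ∀ (n : ℕ) (x : ℤ), -(n : ℤ) ≤ x → x ≤ (n : ℤ) →
        nuca θ (e n) x = nuca θ (f n) x := by
      intro n x h1 h2
      have hrule : θ x = φ (P n + x) := (hmatch n x h1 h2).symm
      calc nuca θ (e n) x = θ x (fun i => c ((P n + x) + i)) := by
            show θ x (fun i => e n (x + i)) = _
            congr 1; funext i
            show c (P n + (x + i)) = c ((P n + x) + i)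
            congr 1; ring
        _ = nuca φ c (P n + x) := by rw [hrule]; rfl
        _ = nuca φ d (P n + x) := by rw [hcd]
        _ = θ x (fun i => d ((P n + x) + i)) := by rw [hrule]; rfl
        _ = nuca θ (f n) x := by
            show _ = θ x (fun i => f n (x + i))
            congr 1; funext i
            show d ((P n + x) + i) = d (P n + (x + i))
            congr 1; ring
    have him : nuca θ e' = nuca θ f' := by
      funext x
      have hT : ({n : ℕ | x.natAbs ≤ n} ∩ ⋂ j ∈ Finset.Icc (x - (r : ℤ)) (x + (r : ℤ)),
          ({n | e n j = e' j} ∩ {n | f n j = f' j})) ∈ U := by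
        refine Filter.inter_mem (hU _) ((Filter.biInter_finset_mem _).2 fun j _ => ?_)
        exact Filter.inter_mem (hlim _) (hlim _)
      obtain ⟨n, hn⟩ := Filter.nonempty_of_mem hT
      obtain ⟨hn1, hn2⟩ := hn
      have hwin : ∀ j : ℤ, x - (r : ℤ) ≤ j → j ≤ x + (r : ℤ) →
          e n j = e' j ∧ f n j = f' j := by
        intro j hj1 hj2
        have := Set.mem_iInter₂.1 hn2 j (Finset.mem_Icc.2 ⟨hj1, hj2⟩)
        exact ⟨this.1, this.2⟩
      calc nuca θ e' x = nuca θ (e n) x := by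
            show θ x (fun i => e' (x + i)) = θ x (fun i => e n (x + i))
            apply hloc x
            intro i h1 h2
            exact ((hwin (x + i) (by omega) (by omega)).1).symm
        _ = nuca θ (f n) x := key n x (by simp only [Set.mem_setOf_eq] at hn1; omega)
            (by simp only [Set.mem_setOf_eq] at hn1; omega)
        _ = nuca θ f' x := by
            show θ x (fun i => f n (x + i)) = θ x (fun i => f' (x + i))
            apply hloc x
            intro i h1 h2
            exact (hwin (x + i) (by omega) (by omega)).2
    have hdiff' : e' ≠ f' := by
      have hq : ∀ n : ℕ, ∃ i : ℤ, -(r : ℤ) ≤ i ∧ i ≤ (r : ℤ) ∧ e n i ≠ f n i := by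
        intro n
        obtain ⟨i, h1, h2, h3⟩ := hdiff n
        refine ⟨i - P n, by omega, by omega, ?_⟩
        show c (P n + (i - P n)) ≠ d (P n + (i - P n))
        rw [show P n + (i - P n) = i from by ring]
        exact h3
      choose q hq1 hq2 hq3 using hq
      obtain ⟨i0, hi0⟩ := ultra_pigeon U
        (fun n => (⟨q n, Finset.mem_Icc.2 ⟨hq1 n, hq2 n⟩⟩ : (Finset.Icc (-(r:ℤ)) (r:ℤ))))
      have hS : ({n : ℕ | (⟨q n, Finset.mem_Icc.2 ⟨hq1 n, hq2 n⟩⟩ :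
            (Finset.Icc (-(r:ℤ)) (r:ℤ))) = i0} ∩
          ({n | e n i0.1 = e' i0.1} ∩ {n | f n i0.1 = f' i0.1})) ∈ U :=
        Filter.inter_mem hi0 (Filter.inter_mem (hlim _) (hlim _))
      obtain ⟨n, hn⟩ := Filter.nonempty_of_mem hS
      obtain ⟨hn1, hn2, hn3⟩ := hn
      intro hef
      apply hq3 n
      have hqn : q n = i0.1 := congrArg Subtype.val hn1
      rw [hqn]
      calc e n i0.1 = e' i0.1 := hn2
        _ = f' i0.1 := by rw [hef]
        _ = f n i0.1 := hn3.symm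
    exact hdiff' (hinj him)
  -- case split
  by_cases hR : ∀ x : ℤ, y0 ≤ x → ∃ i : ℤ, x - (r : ℤ) ≤ i ∧ i ≤ x + (r : ℤ) ∧ c i ≠ d i
  · apply caseHalf
    intro n
    obtain ⟨N, hN⟩ := synd (-(n : ℤ)) (n : ℤ)
    obtain ⟨t, ht1, ht2, ht3⟩ := hN y0
    exact ⟨t, hR t ht1, ht3⟩
  by_cases hL : ∀ x : ℤ, x ≤ y0 → ∃ i : ℤ, x - (r : ℤ) ≤ i ∧ i ≤ x + (r : ℤ) ∧ c i ≠ d i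
  · apply caseHalf
    intro n
    obtain ⟨N, hN⟩ := synd (-(n : ℤ)) (n : ℤ)
    obtain ⟨t, ht1, ht2, ht3⟩ := hN (y0 - (N : ℤ))
    exact ⟨t, hL t (by omega), ht3⟩
  -- diamond case
  push_neg at hR hL
  obtain ⟨x2, hx2y, hw2⟩ := hR
  obtain ⟨x1, hx1y, hw1⟩ := hL
  have hx1 : x1 + (r : ℤ) < y0 := by
    by_contra h
    push_neg at h
    exact hy0 (hw1 y0 (by omega) (by omega))
  have hx2 : y0 < x2 - (r : ℤ) := by
    by_contra h
    push_neg at h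
    exact hy0 (hw2 y0 (by omega) (by omega))
  obtain ⟨k, hk⟩ := pat (x1 - (r : ℤ)) (x2 + (r : ℤ))
  set e : ℤ → A := fun j => c (j - k) with he_def
  set f : ℤ → A := fun j =>
    if x1 - (r : ℤ) ≤ j - k ∧ j - k ≤ x2 + (r : ℤ) then d (j - k) else c (j - k) with hf_def
  have hef : nuca θ e = nuca θ f := by
    funext x
    rcases le_or_gt x (x1 + k) with hx | hx
    · show θ x (fun i => e (x + i)) = θ x (fun i => f (x + i))
      apply hloc x
      intro i h1 h2
      show c (x + i - k) = ite _ _ _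
      by_cases hc : x1 - (r : ℤ) ≤ x + i - k ∧ x + i - k ≤ x2 + (r : ℤ)
      · rw [if_pos hc]
        exact hw1 (x + i - k) (by omega) (by omega)
      · rw [if_neg hc]
    rcases le_or_gt (x2 + k) x with hx' | hx'
    · show θ x (fun i => e (x + i)) = θ x (fun i => f (x + i))
      apply hloc x
      intro i h1 h2
      show c (x + i - k) = ite _ _ _
      by_cases hc : x1 - (r : ℤ) ≤ x + i - k ∧ x + i - k ≤ x2 + (r : ℤ)
      · rw [if_pos hc]
        exact hw2 (x + i - k) (by omega) (by omega)
      · rw [if_neg hc]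
    · have hrule : θ x = φ (x - k) := by
        have h5 := hk (x - k) (by omega) (by omega)
        rw [show x - k + k = x from by ring] at h5
        exact h5.symm
      calc nuca θ e x = θ x (fun i => c ((x - k) + i)) := by
            show θ x (fun i => e (x + i)) = _
            apply hloc x
            intro i h1 h2
            show c (x + i - k) = c ((x - k) + i)
            congr 1; ring
        _ = nuca φ c (x - k) := by rw [hrule]; rfl
        _ = nuca φ d (x - k) := by rw [hcd]
        _ = θ x (fun i => d ((x - k) + i)) := by rw [hrule]; rfl
        _ = nuca θ f x := by
            show _ = θ x (fun i => f (x + i))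
            apply hloc x
            intro i h1 h2
            show d ((x - k) + i) = ite _ _ _
            rw [if_pos ⟨by omega, by omega⟩]
            congr 1; ring
  have h7 : e (y0 + k) = f (y0 + k) := by rw [hinj hef]
  have h8 : c (y0 + k - k) =
      (if x1 - (r:ℤ) ≤ y0 + k - k ∧ y0 + k - k ≤ x2 + (r:ℤ) then d (y0 + k - k)
        else c (y0 + k - k)) := h7
  rw [if_pos ⟨by omega, by omega⟩] at h8
  rw [show y0 + k - k = y0 from by ring] at h8
  exact hy0 h8
end

section
/- Let θ be a uniformly recurrent rule distribution over a finite rule set such that the non-uniform cellular automaton H_θ : Σ^ℤ → Σ^ℤ is injective. Then H_θ is reversible: there exists a finite rule set R₂ and a rule distribution φ ∈ R₂^ℤ such that H_φ is the two-sided inverse of H_θ. -/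
open Function

open Filter
open scoped Classical
set_option linter.unusedSectionVars false

section UltraLimit

lemma exists_ulim_pt {B : Type*} [Finite B] (U : Ultrafilter ℕ) (f : ℕ → B) :
    ∃ b : B, {n | f n = b} ∈ U := by
  by_contra h
  push_neg at h
  haveI := Fintype.ofFinite B
  have h2 : ∀ b : B, {n | f n = b}ᶜ ∈ U := fun b =>
    (Ultrafilter.compl_mem_iff_notMem).2 (h b)
  have h3 : (⋂ b ∈ (Finset.univ : Finset B), {n | f n = b}ᶜ) ∈ U :=
    (Filter.biInter_finset_mem _).2 (fun b _ => h2 b)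
  have h4 : (⋂ b ∈ (Finset.univ : Finset B), {n : ℕ | f n = b}ᶜ) = ∅ := by
    ext n
    simp only [Set.mem_iInter, Set.mem_compl_iff, Set.mem_setOf_eq,
      Set.mem_empty_iff_false, iff_false, not_forall, not_not]
    exact ⟨f n, Finset.mem_univ _, rfl⟩
  rw [h4] at h3
  exact (Filter.empty_notMem (U : Filter ℕ)) h3

lemma exists_ulimit {B : Type*} [Finite B] (U : Ultrafilter ℕ) (F : ℕ → ℤ → B) :
    ∃ G : ℤ → B, ∀ S : Finset ℤ, {n | ∀ y ∈ S, F n y = G y} ∈ U := by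
  choose G hG using fun y => exists_ulim_pt U (fun n => F n y)
  refine ⟨G, fun S => ?_⟩
  have : {n | ∀ y ∈ S, F n y = G y} = ⋂ y ∈ S, {n | F n y = G y} := by
    ext n; simp
  rw [this]
  exact (Filter.biInter_finset_mem _).2 (fun y _ => hG y)

lemma mem_hyper_ge (N : ℕ) : {j : ℕ | N ≤ j} ∈ hyperfilter ℕ := by
  apply Filter.mem_hyperfilter_of_finite_compl
  have : {j : ℕ | N ≤ j}ᶜ = {j | j < N} := by ext j; simp
  rw [this]
  exact Set.finite_Iio N

end UltraLimit

section Lemmas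

variable {A : Type*}

/-- Splicing two configurations with equal images at a `2r`-collar of agreement. -/
lemma hybrid_eq (r : ℕ) (ψ : ℤ → ((ℤ → A) → A)) (hψloc : ∀ y, IsLocalRule r (ψ y))
    (c d : ℤ → A) (him : nuca ψ c = nuca ψ d) (z : ℤ)
    (hcol : ∀ x : ℤ, z ≤ x → x < z + 2*(r:ℤ) → c x = d x) :
    nuca ψ (fun x => if x < z then c x else d x) = nuca ψ c := by
  funext y
  by_cases h1 : z ≤ y - (r:ℤ)
  · have e1 : nuca ψ (fun x => if x < z then c x else d x) y = nuca ψ d y := by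
      apply hψloc y
      intro i hi1 hi2
      have : ¬ (y + i < z) := by omega
      simp only [this, if_false]
    rw [e1, ← him]
  · apply hψloc y
    intro i hi1 hi2
    by_cases hz : y + i < z
    · simp only [hz, if_true]
    · simp only [hz, if_false]
      exact (hcol _ (by omega) (by omega)).symm

/-- Planting a finitely-supported diamond of `ψ` into `θ` contradicts injectivity. -/
lemma planting (r : ℕ) (θ ψ : ℤ → ((ℤ → A) → A))
    (hloc : ∀ x, IsLocalRule r (θ x)) (hinj : Function.Injective (nuca θ))
    (hocc : ∀ S : Finset ℤ, ∃ t, ∀ y ∈ S, θ (t + y) = ψ y)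
    (c d : ℤ → A) (him : nuca ψ c = nuca ψ d) (m₁ m₂ : ℤ)
    (hout : ∀ x : ℤ, x < m₁ ∨ m₂ < x → c x = d x)
    (p : ℤ) (hp : c p ≠ d p) : False := by
  obtain ⟨t, ht⟩ := hocc (Finset.Icc (m₁ - (r:ℤ)) (m₂ + (r:ℤ)))
  have key : nuca θ (fun y => c (y - t)) = nuca θ (fun y => d (y - t)) := by
    funext y
    by_cases hy : y - t ∈ Finset.Icc (m₁ - (r:ℤ)) (m₂ + (r:ℤ))
    · have hr : θ y = ψ (y - t) := by
        have h := ht _ hy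
        rwa [add_sub_cancel] at h
      show θ y (fun i => c (y + i - t)) = θ y (fun i => d (y + i - t))
      have ec : (fun i => c (y + i - t)) = (fun i => c ((y - t) + i)) := by
        funext i; congr 1; ring
      have ed : (fun i => d (y + i - t)) = (fun i => d ((y - t) + i)) := by
        funext i; congr 1; ring
      rw [ec, ed, hr]
      show nuca ψ c (y - t) = nuca ψ d (y - t)
      rw [him]
    · apply hloc y
      intro i hi1 hi2
      show c (y + i - t) = d (y + i - t)
      rw [Finset.mem_Icc] at hy
      exact hout _ (by omega)
  have heq := hinj key
  have h2 := congrFun heq (p + t)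
  simp only [add_sub_cancel_right] at h2
  exact hp h2

end Lemmas

section LimitContra

variable {A : Type*} [Finite A]

lemma limit_contra (r : ℕ) (θ ψ : ℤ → ((ℤ → A) → A))
    (hloc : ∀ x, IsLocalRule r (θ x)) (hinj : Function.Injective (nuca θ))
    (c d : ℤ → A) (him : nuca ψ c = nuca ψ d)
    (t : ℕ → ℤ)
    (hm : ∀ (j : ℕ) (y : ℤ), -(j:ℤ) ≤ y → y ≤ (j:ℤ) → ψ (t j + y) = θ y)
    (hd : ∀ j : ℕ, ∃ p : ℤ, 0 ≤ p ∧ p < 2*(r:ℤ) ∧ c (t j + p) ≠ d (t j + p)) : False := by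
  set U := hyperfilter ℕ with hU
  obtain ⟨G, hG⟩ := exists_ulimit U (fun j y => (c (t j + y), d (t j + y)))
  set c2 : ℤ → A := fun y => (G y).1 with hc2
  set d2 : ℤ → A := fun y => (G y).2 with hd2
  have key : nuca θ c2 = nuca θ d2 := by
    funext y
    obtain ⟨j, hj1, hj2⟩ : ∃ j, (∀ z ∈ Finset.Icc (y - (r:ℤ)) (y + (r:ℤ)),
        (c (t j + z), d (t j + z)) = G z) ∧ y.natAbs ≤ j := by
      obtain ⟨j, hj⟩ := Ultrafilter.nonempty_of_mem
        (Filter.inter_mem (hG (Finset.Icc (y - (r:ℤ)) (y + (r:ℤ)))) (mem_hyper_ge y.natAbs))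
      exact ⟨j, hj.1, hj.2⟩
    have hy1 : -(j:ℤ) ≤ y := by omega
    have hy2 : y ≤ (j:ℤ) := by omega
    have h1 : nuca θ c2 y = nuca θ (fun x => c (t j + x)) y := by
      apply hloc y
      intro i hi1 hi2
      have hz : (y + i) ∈ Finset.Icc (y - (r:ℤ)) (y + (r:ℤ)) := by
        rw [Finset.mem_Icc]; omega
      have h := hj1 _ hz
      show (G (y+i)).1 = c (t j + (y + i))
      rw [← h]
    have h1' : nuca θ d2 y = nuca θ (fun x => d (t j + x)) y := by
      apply hloc y
      intro i hi1 hi2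
      have hz : (y + i) ∈ Finset.Icc (y - (r:ℤ)) (y + (r:ℤ)) := by
        rw [Finset.mem_Icc]; omega
      have h := hj1 _ hz
      show (G (y+i)).2 = d (t j + (y + i))
      rw [← h]
    have h2 : nuca θ (fun x => c (t j + x)) y = nuca ψ c (t j + y) := by
      show θ y (fun i => c (t j + (y + i))) = ψ (t j + y) (fun i => c (t j + y + i))
      rw [hm j y hy1 hy2]
      congr 1
      funext i
      congr 1
      ring
    have h2' : nuca θ (fun x => d (t j + x)) y = nuca ψ d (t j + y) := by
      show θ y (fun i => d (t j + (y + i))) = ψ (t j + y) (fun i => d (t j + y + i))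
      rw [hm j y hy1 hy2]
      congr 1
      funext i
      congr 1
      ring
    rw [h1, h1', h2, h2', him]
  have hne : c2 ≠ d2 := by
    obtain ⟨j, hj⟩ := Ultrafilter.nonempty_of_mem (hG (Finset.Icc (0:ℤ) (2*(r:ℤ) - 1)))
    obtain ⟨p, hp0, hp1, hpne⟩ := hd j
    have hz : p ∈ Finset.Icc (0:ℤ) (2*(r:ℤ) - 1) := by rw [Finset.mem_Icc]; omega
    have h := hj _ hz
    intro hcd
    apply hpne
    have e1 : c (t j + p) = (G p).1 := by rw [← h]
    have e2 : d (t j + p) = (G p).2 := by rw [← h]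
    rw [e1, e2]
    exact congrFun hcd p
  exact hne (hinj key)

end LimitContra

section SI

variable {A : Type*} [Finite A]

lemma stable_inj (r : ℕ) (θ : ℤ → ((ℤ → A) → A)) (hfin : (Set.range θ).Finite)
    (hloc : ∀ x, IsLocalRule r (θ x)) (hrec : UnifRecurrent θ)
    (hinj : Function.Injective (nuca θ)) :
    ∃ s : ℕ, ∀ (x : ℤ) (c d : ℤ → A),
      (∀ y ∈ Finset.Icc (x - (s:ℤ)) (x + (s:ℤ)), nuca θ c y = nuca θ d y) → c x = d x := by
  by_contra hSI
  push_neg at hSI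
  choose X C D hagree hne using hSI
  haveI : Finite ↥(Set.range θ) := hfin.to_subtype
  set U := hyperfilter ℕ with hUdef
  obtain ⟨G, hG⟩ := exists_ulimit U
    (fun n y => ((⟨θ (X n + y), Set.mem_range_self _⟩ : ↥(Set.range θ)),
      C n (X n + y), D n (X n + y)))
  set ψ : ℤ → ((ℤ → A) → A) := fun y => ((G y).1 : (ℤ → A) → A) with hψdef
  set cs : ℤ → A := fun y => (G y).2.1 with hcs
  set ds : ℤ → A := fun y => (G y).2.2 with hds
  have hψloc : ∀ y, IsLocalRule r (ψ y) := by
    intro y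
    obtain ⟨x', hx'⟩ := (G y).1.2
    show IsLocalRule r ((G y).1 : (ℤ → A) → A)
    rw [← hx']
    exact hloc x'
  have hGS : ∀ S : Finset ℤ, {n | ∀ y ∈ S,
      θ (X n + y) = ψ y ∧ C n (X n + y) = cs y ∧ D n (X n + y) = ds y} ∈ U := by
    intro S
    filter_upwards [hG S] with n hn
    intro y hy
    have h := hn y hy
    refine ⟨?_, ?_, ?_⟩
    · exact congrArg (fun p => ((p.1 : ↥(Set.range θ)) : (ℤ → A) → A)) h
    · exact congrArg (fun p => p.2.1) h
    · exact congrArg (fun p => p.2.2) h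
  -- (K2) equal images
  have him : nuca ψ cs = nuca ψ ds := by
    funext y
    obtain ⟨n, hn1, hn2⟩ : ∃ n, (∀ z ∈ insert y (Finset.Icc (y - (r:ℤ)) (y + (r:ℤ))),
        θ (X n + z) = ψ z ∧ C n (X n + z) = cs z ∧ D n (X n + z) = ds z) ∧ y.natAbs ≤ n := by
      obtain ⟨n, hn⟩ := Ultrafilter.nonempty_of_mem
        (Filter.inter_mem (hGS (insert y (Finset.Icc (y - (r:ℤ)) (y + (r:ℤ)))))
          (mem_hyper_ge y.natAbs))
      exact ⟨n, hn.1, hn.2⟩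
    have h1 : nuca ψ cs y = nuca ψ (fun x => C n (X n + x)) y := by
      apply hψloc y
      intro i hi1 hi2
      have hz : (y + i) ∈ insert y (Finset.Icc (y - (r:ℤ)) (y + (r:ℤ))) := by
        apply Finset.mem_insert_of_mem; rw [Finset.mem_Icc]; omega
      exact ((hn1 _ hz).2.1).symm
    have h1' : nuca ψ ds y = nuca ψ (fun x => D n (X n + x)) y := by
      apply hψloc y
      intro i hi1 hi2
      have hz : (y + i) ∈ insert y (Finset.Icc (y - (r:ℤ)) (y + (r:ℤ))) := by
        apply Finset.mem_insert_of_mem; rw [Finset.mem_Icc]; omega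
      exact ((hn1 _ hz).2.2).symm
    have hrule : ψ y = θ (X n + y) := ((hn1 y (Finset.mem_insert_self _ _)).1).symm
    have h2 : nuca ψ (fun x => C n (X n + x)) y = nuca θ (C n) (X n + y) := by
      show ψ y (fun i => C n (X n + (y + i))) = θ (X n + y) (fun i => C n (X n + y + i))
      rw [hrule]
      congr 1
      funext i
      congr 1
      ring
    have h2' : nuca ψ (fun x => D n (X n + x)) y = nuca θ (D n) (X n + y) := by
      show ψ y (fun i => D n (X n + (y + i))) = θ (X n + y) (fun i => D n (X n + y + i))
      rw [hrule]
      congr 1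
      funext i
      congr 1
      ring
    have h3 : nuca θ (C n) (X n + y) = nuca θ (D n) (X n + y) := by
      apply hagree n
      rw [Finset.mem_Icc]
      omega
    rw [h1, h1', h2, h2', h3]
  -- (K3) differ at 0
  have hne0 : cs 0 ≠ ds 0 := by
    obtain ⟨n, hn⟩ := Ultrafilter.nonempty_of_mem (hGS {0})
    have h := hn 0 (Finset.mem_singleton_self 0)
    rw [← h.2.1, ← h.2.2]
    simpa using hne n
  -- (K4) occurrences of ψ-words in θ
  have hocc : ∀ S : Finset ℤ, ∃ t, ∀ y ∈ S, θ (t + y) = ψ y := by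
    intro S
    obtain ⟨n, hn⟩ := Ultrafilter.nonempty_of_mem (hGS S)
    exact ⟨X n, fun y hy => (hn y hy).1⟩
  -- (K5) occurrences of θ-words in ψ, at controlled positions
  have hwin : ∀ (j : ℕ) (T' : ℤ) (n₁ : ℕ),
      (∀ x : ℤ, ∃ k : ℤ, x ≤ k ∧ k ≤ x + (n₁:ℤ) ∧
        ∀ i : ℕ, i < 2*j+1 → θ (k + i) = θ (-(j:ℤ) + i)) →
      ∃ t : ℤ, T' + j ≤ t ∧ t ≤ T' + n₁ + j ∧
        ∀ y : ℤ, -(j:ℤ) ≤ y → y ≤ (j:ℤ) → ψ (t + y) = θ y := by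
    intro j T' n₁ hn₁
    obtain ⟨t₀, ht₀⟩ := hocc (Finset.Icc T' (T' + n₁ + 2*j))
    obtain ⟨k, hk1, hk2, hk3⟩ := hn₁ (t₀ + T')
    refine ⟨k - t₀ + j, by omega, by omega, ?_⟩
    intro y hy1 hy2
    have hmem : (k - t₀ + j + y) ∈ Finset.Icc T' (T' + (n₁:ℤ) + 2*j) := by
      rw [Finset.mem_Icc]; omega
    have he1 : t₀ + (k - t₀ + (j:ℤ) + y) = k + ((y + j).toNat : ℤ) := by omega
    have he2 : -(j:ℤ) + ((y + j).toNat : ℤ) = y := by omega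
    calc ψ (k - t₀ + j + y) = θ (t₀ + (k - t₀ + j + y)) := (ht₀ _ hmem).symm
      _ = θ (k + ((y + j).toNat : ℤ)) := by rw [he1]
      _ = θ (-(j:ℤ) + ((y + j).toNat : ℤ)) := hk3 _ (by omega)
      _ = θ y := by rw [he2]
  -- case analysis on agreement collars
  by_cases hA1 : ∃ z : ℤ, z ≤ -(2*(r:ℤ)) ∧ ∀ x : ℤ, z ≤ x → x < z + 2*(r:ℤ) → cs x = ds x
  · by_cases hA2 : ∃ z : ℤ, 1 ≤ z ∧ ∀ x : ℤ, z ≤ x → x < z + 2*(r:ℤ) → cs x = ds x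
    · -- Case A: two collars around 0: finite-difference diamond, plant it
      obtain ⟨z₁, hz₁, hP₁⟩ := hA1
      obtain ⟨z₂, hz₂, hP₂⟩ := hA2
      have hw₁ : nuca ψ (fun x => if x < z₁ then cs x else ds x) = nuca ψ cs :=
        hybrid_eq r ψ hψloc cs ds him z₁ hP₁
      set w₁ : ℤ → A := fun x => if x < z₁ then cs x else ds x with hw₁def
      have hcol₂ : ∀ x : ℤ, z₂ ≤ x → x < z₂ + 2*(r:ℤ) → w₁ x = cs x := by
        intro x hx1 hx2
        have hnx : ¬ (x < z₁) := by omega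
        show (if x < z₁ then cs x else ds x) = cs x
        rw [if_neg hnx]
        exact (hP₂ x hx1 hx2).symm
      have hw₂ : nuca ψ (fun x => if x < z₂ then w₁ x else cs x) = nuca ψ w₁ :=
        hybrid_eq r ψ hψloc w₁ cs hw₁ z₂ hcol₂
      set w₂ : ℤ → A := fun x => if x < z₂ then w₁ x else cs x with hw₂def
      refine planting r θ ψ hloc hinj hocc cs w₂ (hw₂.trans hw₁).symm z₁ (z₂ - 1) ?_ 0 ?_
      · intro x hx
        rcases hx with hx | hx
        · show cs x = (if x < z₂ then w₁ x else cs x)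
          rw [if_pos (by omega)]
          show cs x = (if x < z₁ then cs x else ds x)
          rw [if_pos hx]
        · show cs x = (if x < z₂ then w₁ x else cs x)
          rw [if_neg (by omega)]
      · show cs 0 ≠ (if (0:ℤ) < z₂ then w₁ 0 else cs 0)
        rw [if_pos (by omega)]
        show cs 0 ≠ (if (0:ℤ) < z₁ then cs 0 else ds 0)
        rw [if_neg (by omega)]
        exact hne0
    · -- Case C: differences 2r-dense to the right
      push_neg at hA2
      have hdense : ∀ z : ℤ, 1 ≤ z → ∃ x : ℤ, z ≤ x ∧ x < z + 2*(r:ℤ) ∧ cs x ≠ ds x := by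
        intro z hz
        have h := hA2 z hz
        obtain ⟨x, hx1, hx2, hx3⟩ := h
        exact ⟨x, hx1, hx2, hx3⟩
      have hcoreR : ∀ j : ℕ, ∃ t : ℤ, 1 ≤ t ∧
          ∀ y : ℤ, -(j:ℤ) ≤ y → y ≤ (j:ℤ) → ψ (t + y) = θ y := by
        intro j
        obtain ⟨n₁, hn₁⟩ := hrec (-(j:ℤ)) (2*j+1)
        obtain ⟨t, h1, h2, h3⟩ := hwin j 1 n₁ hn₁
        exact ⟨t, by omega, h3⟩
      choose T hT1 hT3 using hcoreR
      refine limit_contra r θ ψ hloc hinj cs ds him T (fun j y hy1 hy2 => hT3 j y hy1 hy2) ?_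
      intro j
      obtain ⟨x, hx1, hx2, hx3⟩ := hdense (T j) (hT1 j)
      refine ⟨x - T j, by omega, by omega, ?_⟩
      have hxx : T j + (x - T j) = x := by ring
      rw [hxx]
      exact hx3
  · -- Case B: differences 2r-dense to the left
    push_neg at hA1
    have hdense : ∀ z : ℤ, z ≤ -(2*(r:ℤ)) → ∃ x : ℤ, z ≤ x ∧ x < z + 2*(r:ℤ) ∧ cs x ≠ ds x := by
      intro z hz
      have h := hA1 z hz
      obtain ⟨x, hx1, hx2, hx3⟩ := h
      exact ⟨x, hx1, hx2, hx3⟩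
    have hcoreL : ∀ j : ℕ, ∃ t : ℤ, t ≤ -(2*(r:ℤ)) ∧
        ∀ y : ℤ, -(j:ℤ) ≤ y → y ≤ (j:ℤ) → ψ (t + y) = θ y := by
      intro j
      obtain ⟨n₁, hn₁⟩ := hrec (-(j:ℤ)) (2*j+1)
      obtain ⟨t, h1, h2, h3⟩ := hwin j (-(2*(r:ℤ)) - n₁ - j) n₁ hn₁
      exact ⟨t, by omega, h3⟩
    choose T hT1 hT3 using hcoreL
    refine limit_contra r θ ψ hloc hinj cs ds him T (fun j y hy1 hy2 => hT3 j y hy1 hy2) ?_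
    intro j
    obtain ⟨x, hx1, hx2, hx3⟩ := hdense (T j) (hT1 j)
    refine ⟨x - T j, by omega, by omega, ?_⟩
    have hxx : T j + (x - T j) = x := by ring
    rw [hxx]
    exact hx3

end SI

section Counting

variable {A : Type*} [Fintype A] [Nonempty A]

/-- The set of image patterns of length `M` starting at `z`. -/
noncomputable def ImPat (θ : ℤ → ((ℤ → A) → A)) (z : ℤ) (M : ℕ) : Finset (Fin M → A) :=
  Finset.univ.filter (fun u => ∃ c : ℤ → A, ∀ i : Fin M, nuca θ c (z + (i.1 : ℤ)) = u i)

variable (θ : ℤ → ((ℤ → A) → A))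

lemma impat_lower (s : ℕ)
    (hdet : ∀ (x : ℤ) (c d : ℤ → A),
      (∀ y ∈ Finset.Icc (x - (s:ℤ)) (x + (s:ℤ)), nuca θ c y = nuca θ d y) → c x = d x)
    (z : ℤ) (M : ℕ) (hM : 2*s ≤ M) :
    Fintype.card A ^ (M - 2*s) ≤ (ImPat θ z M).card := by
  set In := M - 2*s with hIn
  -- the configuration determined by an interior pattern
  set cfg : (Fin In → A) → (ℤ → A) := fun τ y =>
    if h : 0 ≤ y - z - s ∧ y - z - s < (In : ℤ) then
      τ ⟨(y - z - s).toNat, by omega⟩ else Classical.arbitrary A with hcfg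
  have hval : ∀ (τ : Fin In → A) (i : Fin In), cfg τ (z + s + i.1) = τ i := by
    intro τ i
    have hcond : 0 ≤ z + (s:ℤ) + i.1 - z - s ∧ z + (s:ℤ) + i.1 - z - s < (In : ℤ) := by
      constructor <;> [omega; (push_cast; omega)]
    show (if h : _ then _ else _) = τ i
    rw [dif_pos hcond]
    congr
    omega
  set Φ : (Fin In → A) → (Fin M → A) := fun τ i => nuca θ (cfg τ) (z + (i.1 : ℤ)) with hΦ
  have hmem : ∀ τ, Φ τ ∈ ImPat θ z M := by
    intro τ
    rw [ImPat, Finset.mem_filter]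
    exact ⟨Finset.mem_univ _, cfg τ, fun i => rfl⟩
  have hinjΦ : Set.InjOn Φ ↑(Finset.univ : Finset (Fin In → A)) := by
    intro τ₁ _ τ₂ _ heq
    funext i
    rw [← hval τ₁ i, ← hval τ₂ i]
    apply hdet (z + s + i.1)
    intro y hy
    rw [Finset.mem_Icc] at hy
    have hj0 : 0 ≤ y - z := by omega
    have hjM : (y - z).toNat < M := by omega
    have hyz : y = z + (((y - z).toNat : ℕ) : ℤ) := by omega
    have := congrFun heq ⟨(y - z).toNat, hjM⟩
    simp only [hΦ] at this
    rw [hyz]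
    exact this
  calc Fintype.card A ^ (M - 2*s) = (Finset.univ : Finset (Fin In → A)).card := by
        rw [Finset.card_univ, Fintype.card_fun, Fintype.card_fin]
    _ ≤ (ImPat θ z M).card := Finset.card_le_card_of_injOn Φ (fun τ _ => hmem τ) hinjΦ

lemma impat_block (z : ℤ) (L B : ℕ) :
    (ImPat θ z (L*(B+1))).card ≤ (ImPat θ z L).card * (ImPat θ (z + L) (L*B)).card := by
  have hsz : L*(B+1) = L + L*B := by ring
  set Φ : (Fin (L*(B+1)) → A) → (Fin L → A) × (Fin (L*B) → A) := fun v =>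
    (fun i => v ⟨i.1, by omega⟩, fun i => v ⟨L + i.1, by omega⟩) with hΦ
  have hmem : ∀ v ∈ ImPat θ z (L*(B+1)), Φ v ∈ (ImPat θ z L) ×ˢ (ImPat θ (z + L) (L*B)) := by
    intro v hv
    rw [ImPat, Finset.mem_filter] at hv
    obtain ⟨-, c, hc⟩ := hv
    rw [Finset.mem_product]
    constructor
    · rw [ImPat, Finset.mem_filter]
      refine ⟨Finset.mem_univ _, c, fun i => ?_⟩
      exact hc ⟨i.1, by omega⟩
    · rw [ImPat, Finset.mem_filter]
      refine ⟨Finset.mem_univ _, c, fun i => ?_⟩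
      have h2 := hc ⟨L + i.1, by omega⟩
      show nuca θ c (z + (L:ℤ) + (i.1:ℤ)) = v ⟨L + i.1, by omega⟩
      rw [← h2]
      congr 1
      push_cast
      ring
  have hinjΦ : Set.InjOn Φ ↑(ImPat θ z (L*(B+1))) := by
    intro v₁ _ v₂ _ heq
    funext t
    by_cases ht : t.1 < L
    · have := congrFun (congrArg Prod.fst heq) ⟨t.1, ht⟩
      simpa using this
    · have htL : t.1 - L < L*B := by omega
      have h2 := congrFun (congrArg Prod.snd heq) ⟨t.1 - L, htL⟩
      simp only [hΦ] at h2
      have he : (⟨L + (t.1 - L), by omega⟩ : Fin (L*(B+1))) = t := by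
        apply Fin.ext; show L + (t.1 - L) = t.1; omega
      rwa [he] at h2
  calc (ImPat θ z (L*(B+1))).card
      ≤ ((ImPat θ z L) ×ˢ (ImPat θ (z + L) (L*B))).card :=
        Finset.card_le_card_of_injOn Φ hmem hinjΦ
    _ = (ImPat θ z L).card * (ImPat θ (z + L) (L*B)).card := Finset.card_product _ _

lemma impat_pow (L B : ℕ) (D : ℕ) (hblock : ∀ z : ℤ, (ImPat θ z L).card ≤ D) :
    ∀ z : ℤ, (ImPat θ z (L*B)).card ≤ D^B := by
  induction B with
  | zero =>
    intro z
    have : (ImPat θ z (L*0)).card ≤ (Finset.univ : Finset (Fin (L*0) → A)).card :=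
      Finset.card_le_univ _
    simpa using this
  | succ B ih =>
    intro z
    calc (ImPat θ z (L*(B+1))).card
        ≤ (ImPat θ z L).card * (ImPat θ (z + L) (L*B)).card := impat_block θ z L B
      _ ≤ D * D^B := Nat.mul_le_mul (hblock z) (ih (z + L))
      _ = D^(B+1) := by ring

end Counting

section Counting2
variable {A : Type*} [Fintype A] [Nonempty A]
variable (θ : ℤ → ((ℤ → A) → A))

/-- Blocks containing a (transported) orphan have deficient image count. -/
lemma impat_orphan (p : ℤ → A) (x₀ : ℤ) (m n₀ : ℕ) (hm : 1 ≤ m)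
    (htrans : ∀ k : ℤ, (∀ i : ℕ, i < m → θ (k + i) = θ (x₀ + i)) →
      ¬ ∃ c : ℤ → A, ∀ i : ℕ, i < m → nuca θ c (k + i) = p (x₀ + i))
    (hocc : ∀ x : ℤ, ∃ k : ℤ, x ≤ k ∧ k ≤ x + (n₀:ℤ) ∧ ∀ i : ℕ, i < m → θ (k + i) = θ (x₀ + i))
    (z : ℤ) :
    (ImPat θ z (n₀ + m)).card ≤ Fintype.card A ^ (n₀ + m) - Fintype.card A ^ n₀ := by
  set L := n₀ + m with hL
  obtain ⟨k, hk1, hk2, hk3⟩ := hocc z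
  set o := (k - z).toNat with ho
  have ho1 : (o:ℤ) = k - z := Int.toNat_of_nonneg (by omega)
  have ho2 : o ≤ n₀ := by omega
  set Pbad : (Fin L → A) → Prop := fun v => ∀ i : ℕ, (h : i < m) → v ⟨o + i, by omega⟩ = p (x₀ + i)
    with hPbad
  -- image patterns avoid the orphan
  have hsub : ImPat θ z L ⊆ Finset.univ.filter (fun v => ¬ Pbad v) := by
    intro v hv
    rw [ImPat, Finset.mem_filter] at hv
    obtain ⟨-, c, hc⟩ := hv
    rw [Finset.mem_filter]
    refine ⟨Finset.mem_univ _, fun hbad => ?_⟩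
    apply htrans k hk3
    refine ⟨c, fun i hi => ?_⟩
    have h1 := hc ⟨o + i, by omega⟩
    have h2 := hbad i hi
    rw [h2] at h1
    rw [← h1]
    congr 1
    push_cast
    omega
  -- many patterns do contain the orphan
  have hlow : Fintype.card A ^ n₀ ≤ (Finset.univ.filter (fun v : Fin L → A => Pbad v)).card := by
    set ι : (Fin n₀ → A) → (Fin L → A) := fun w t =>
      if h1 : t.1 < o then w ⟨t.1, by omega⟩
      else if h2 : t.1 < o + m then p (x₀ + (t.1 - o : ℕ))
      else w ⟨t.1 - m, by omega⟩ with hι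
    have hmem : ∀ w, ι w ∈ Finset.univ.filter (fun v : Fin L → A => Pbad v) := by
      intro w
      rw [Finset.mem_filter]
      refine ⟨Finset.mem_univ _, fun i hi => ?_⟩
      show (if h1 : o + i < o then _ else if h2 : o + i < o + m then _ else _) = p (x₀ + i)
      rw [dif_neg (by omega), dif_pos (by omega)]
      congr 2
      push_cast
      omega
    have hinjι : Set.InjOn ι ↑(Finset.univ : Finset (Fin n₀ → A)) := by
      intro w₁ _ w₂ _ heq
      funext t
      by_cases ht : t.1 < o
      · have h := congrFun heq ⟨t.1, by omega⟩
        simp only [hι] at h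
        rw [dif_pos ht, dif_pos ht] at h
        convert h using 2
      · have h := congrFun heq ⟨t.1 + m, by omega⟩
        simp only [hι] at h
        rw [dif_neg (by omega), dif_neg (by omega), dif_neg (by omega), dif_neg (by omega)] at h
        have he : t.1 + m - m = t.1 := by omega
        convert h using 2 <;> (apply Fin.ext; simp [he])
    calc Fintype.card A ^ n₀ = (Finset.univ : Finset (Fin n₀ → A)).card := by
          rw [Finset.card_univ, Fintype.card_fun, Fintype.card_fin]
      _ ≤ _ := Finset.card_le_card_of_injOn ι (fun w _ => hmem w) hinjι
  have htotal : (Finset.univ.filter (fun v : Fin L → A => Pbad v)).card +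
      (Finset.univ.filter (fun v : Fin L → A => ¬ Pbad v)).card = Fintype.card A ^ L := by
    rw [Finset.card_filter_add_card_filter_not, Finset.card_univ,
      Fintype.card_fun, Fintype.card_fin]
  have := Finset.card_le_card hsub
  omega

end Counting2

section Arith

lemma binom_aux (a : ℕ) : ∀ N : ℕ, 1 ≤ N → a^N + N * a^(N-1) ≤ (a+1)^N := by
  intro N
  induction N with
  | zero => omega
  | succ N ih =>
    intro _
    by_cases hN : 1 ≤ N
    · have h1 := ih hN
      have h4 : a^(N-1) * a = a^N := by
        rw [← pow_succ]
        congr 1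
        omega
      have key : (a^N + N * a^(N-1)) * (a+1) = a^(N+1) + (N+1) * a^N + N * a^(N-1) := by
        have expand : (a^N + N * a^(N-1)) * (a+1)
            = a^N * a + N * (a^(N-1) * a) + a^N + N * a^(N-1) := by ring
        rw [expand, h4, ← pow_succ]
        ring
      calc a^(N+1) + (N+1) * a^((N+1)-1) = a^(N+1) + (N+1) * a^N := by norm_num
        _ ≤ (a^N + N * a^(N-1)) * (a+1) := by omega
        _ ≤ (a+1)^N * (a+1) := Nat.mul_le_mul_right _ h1
        _ = (a+1)^(N+1) := by ring
    · have hN0 : N = 0 := by omega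
      subst hN0
      simp

lemma two_pow_aux (n : ℕ) (hn : 2 ≤ n) : (n-1)^n * 2 ≤ n^n := by
  have h := binom_aux (n-1) n (by omega)
  have hsub : n - 1 + 1 = n := by omega
  rw [hsub] at h
  have h4 : (n-1)^(n-1) * (n-1) = (n-1)^n := by
    rw [← pow_succ, hsub]
  have h5 : (n-1)^(n-1) * (n-1) ≤ (n-1)^(n-1) * n := Nat.mul_le_mul_left _ (by omega)
  have h6 : (n-1)^(n-1) * n = n * (n-1)^(n-1) := by ring
  omega

lemma geo_aux (n k : ℕ) (hn : 2 ≤ n) : (n-1)^(n*k) * 2^k ≤ n^(n*k) := by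
  calc (n-1)^(n*k) * 2^k = ((n-1)^n * 2)^k := by rw [mul_pow, ← pow_mul]
    _ ≤ (n^n)^k := Nat.pow_le_pow_left (two_pow_aux n hn) k
    _ = n^(n*k) := by rw [← pow_mul]

lemma arith_main (q m s : ℕ) (hq : 2 ≤ q) (hm : 1 ≤ m) :
    ∃ B : ℕ, 2*s + 1 ≤ B ∧ (q^m - 1)^B * q^(2*s) < q^(m*B) := by
  set n := q^m with hndef
  have hn : 2 ≤ n := le_trans hq (Nat.le_self_pow (by omega) q)
  set k := 2*s*q + 1 with hkdef
  have h2k : q^(2*s) < 2^k := by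
    calc q^(2*s) ≤ (2^q)^(2*s) := Nat.pow_le_pow_left (le_of_lt (Nat.lt_two_pow_self (n := q))) _
      _ = 2^(q*(2*s)) := by rw [← pow_mul]
      _ < 2^k := by
          apply Nat.pow_lt_pow_right (by norm_num)
          have : q*(2*s) = 2*s*q := by ring
          omega
  refine ⟨n * k, ?_, ?_⟩
  · have h1 : k ≤ n * k := Nat.le_mul_of_pos_left k (by omega)
    have h2 : 2*s ≤ 2*s*q := by
      calc 2*s = 2*s*1 := by ring
        _ ≤ 2*s*q := Nat.mul_le_mul_left _ (by omega)
    omega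
  · have hpos : 0 < (n-1)^(n*k) := Nat.pow_pos (by omega)
    calc (n - 1)^(n*k) * q^(2*s) < (n-1)^(n*k) * 2^k :=
          mul_lt_mul_of_pos_left h2k hpos
      _ ≤ n^(n*k) := geo_aux n k hn
      _ = q^(m*(n*k)) := by rw [hndef, ← pow_mul]

end Arith

section PS
variable {A : Type*} [Fintype A] [Nontrivial A] [Nonempty A]

lemma pattern_surj (θ : ℤ → ((ℤ → A) → A)) (hrec : UnifRecurrent θ) (s : ℕ)
    (hdet : ∀ (x : ℤ) (c d : ℤ → A),
      (∀ y ∈ Finset.Icc (x - (s:ℤ)) (x + (s:ℤ)), nuca θ c y = nuca θ d y) → c x = d x) :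
    ∀ (x₀ : ℤ) (m : ℕ) (p : ℤ → A), ∃ c : ℤ → A, ∀ i : ℕ, i < m → nuca θ c (x₀ + i) = p (x₀ + i) := by
  by_contra h
  push_neg at h
  obtain ⟨x₀, m, p, horph⟩ := h
  have hq : 2 ≤ Fintype.card A := Fintype.one_lt_card
  set q := Fintype.card A with hqdef
  have hm : 1 ≤ m := by
    by_contra hm'
    obtain ⟨i, hi, -⟩ := horph (fun _ => Classical.arbitrary A)
    omega
  -- transported orphans
  have htrans : ∀ k : ℤ, (∀ i : ℕ, i < m → θ (k + i) = θ (x₀ + i)) →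
      ¬ ∃ c : ℤ → A, ∀ i : ℕ, i < m → nuca θ c (k + i) = p (x₀ + i) := by
    intro k hk ⟨c, hc⟩
    obtain ⟨i, hi, hne⟩ := horph (fun y => c (y - x₀ + k))
    apply hne
    have hrule : θ (x₀ + i) = θ (k + i) := (hk i hi).symm
    calc nuca θ (fun y => c (y - x₀ + k)) (x₀ + i)
        = θ (x₀ + i) (fun w => c (x₀ + i + w - x₀ + k)) := rfl
      _ = θ (k + i) (fun w => c (k + i + w)) := by
          rw [hrule]
          congr 1
          funext w
          congr 1
          ring
      _ = nuca θ c (k + i) := rfl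
      _ = p (x₀ + i) := hc i hi
  obtain ⟨n₀, hocc⟩ := hrec x₀ m
  set L := n₀ + m with hLdef
  set D := q^L - q^n₀ with hDdef
  have hblock : ∀ z : ℤ, (ImPat θ z L).card ≤ D :=
    fun z => impat_orphan θ p x₀ m n₀ hm htrans hocc z
  obtain ⟨B, hB1, hB2⟩ := arith_main q m s hq hm
  have hLB : 2*s ≤ L*B := by
    have h1 : B ≤ L*B := Nat.le_mul_of_pos_left B (by omega)
    omega
  have hlow := impat_lower θ s hdet 0 (L*B) hLB
  have hup := impat_pow θ L B D hblock 0
  -- the contradiction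
  have hqm1 : 1 ≤ q^m := Nat.pow_pos (by omega)
  have hD : D = q^n₀ * (q^m - 1) := by
    have e1 : q^n₀ * q^m = q^n₀ * (q^m - 1) + q^n₀ := by
      have e2 : q^m = (q^m - 1) + 1 := by omega
      calc q^n₀ * q^m = q^n₀ * ((q^m - 1) + 1) := by rw [← e2]
        _ = q^n₀ * (q^m - 1) + q^n₀ := by ring
    have e3 : q^L = q^n₀ * q^m := by rw [hLdef, pow_add]
    omega
  have hchain : q^(L*B) < q^(L*B) := by
    calc q^(L*B) = q^(L*B - 2*s) * q^(2*s) := by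
          rw [← pow_add]
          congr 1
          omega
      _ ≤ (ImPat θ 0 (L*B)).card * q^(2*s) := Nat.mul_le_mul_right _ hlow
      _ ≤ D^B * q^(2*s) := Nat.mul_le_mul_right _ hup
      _ = (q^n₀)^B * ((q^m - 1)^B * q^(2*s)) := by rw [hD, mul_pow]; ring
      _ < (q^n₀)^B * q^(m*B) := by
          apply mul_lt_mul_of_pos_left hB2
          exact Nat.pow_pos (Nat.pow_pos (by omega))
      _ = q^(L*B) := by
          rw [← pow_mul, ← pow_add]
          congr 1
          rw [hLdef]
          ring
  exact absurd hchain (lt_irrefl _)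

end PS

section Surj
variable {A : Type*} [Finite A]

lemma full_surj (r : ℕ) (θ : ℤ → ((ℤ → A) → A)) (hloc : ∀ x, IsLocalRule r (θ x))
    (hps : ∀ (x₀ : ℤ) (m : ℕ) (p : ℤ → A),
      ∃ c : ℤ → A, ∀ i : ℕ, i < m → nuca θ c (x₀ + i) = p (x₀ + i)) :
    ∀ e : ℤ → A, ∃ c, nuca θ c = e := by
  intro e
  choose cn hcn using fun n : ℕ => hps (-(n:ℤ)) (2*n+1) e
  obtain ⟨G, hG⟩ := exists_ulimit (hyperfilter ℕ) (fun n y => cn n y)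
  refine ⟨G, ?_⟩
  funext y
  obtain ⟨n, hn1, hn2⟩ : ∃ n, (∀ z ∈ Finset.Icc (y-(r:ℤ)) (y+(r:ℤ)), cn n z = G z) ∧
      y.natAbs ≤ n := by
    obtain ⟨n, hn⟩ := Ultrafilter.nonempty_of_mem
      (Filter.inter_mem (hG (Finset.Icc (y-(r:ℤ)) (y+(r:ℤ)))) (mem_hyper_ge y.natAbs))
    exact ⟨n, hn.1, hn.2⟩
  have h1 : nuca θ G y = nuca θ (cn n) y := by
    apply hloc y
    intro i hi1 hi2
    exact (hn1 (y + i) (by rw [Finset.mem_Icc]; omega)).symm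
  rw [h1]
  have hi : ((y + n).toNat : ℤ) = y + n := Int.toNat_of_nonneg (by omega)
  have hv := hcn n (y + n).toNat (by omega)
  have hy : -(n:ℤ) + ((y + n).toNat : ℤ) = y := by omega
  rw [hy] at hv
  exact hv

end Surj
/-- A NUCA with a uniformly recurrent rule distribution over a finite rule set which is
injective is reversible: some NUCA with a finite rule set is its two-sided inverse. -/
theorem stmt_2 {A : Type*} [Finite A] (r : ℕ) (θ : ℤ → ((ℤ → A) → A))
    (hfin : (Set.range θ).Finite) (hloc : ∀ x, IsLocalRule r (θ x))
    (hrec : UnifRecurrent θ) (hinj : Function.Injective (nuca θ)) :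
    ∃ (s : ℕ) (φ : ℤ → ((ℤ → A) → A)), (Set.range φ).Finite ∧
      (∀ x, IsLocalRule s (φ x)) ∧
      (∀ c, nuca φ (nuca θ c) = c) ∧ (∀ c, nuca θ (nuca φ c) = c) := by
  rcases isEmpty_or_nonempty A with hA | hA
  · exact ⟨r, θ, hfin, hloc, fun c => (IsEmpty.false (c 0)).elim,
      fun c => (IsEmpty.false (c 0)).elim⟩
  · rcases subsingleton_or_nontrivial A with hS | hN
    · refine ⟨0, fun _ => fun u => u 0, ?_, ?_, ?_, ?_⟩
      · have : Set.range (fun (_ : ℤ) => fun (u : ℤ → A) => u 0) = {fun (u : ℤ → A) => u 0} :=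
          Set.range_const
        rw [this]
        exact Set.finite_singleton _
      · intro x u v h
        exact h 0 (by norm_num) (by norm_num)
      · intro c; funext x; exact Subsingleton.elim _ _
      · intro c; funext x; exact Subsingleton.elim _ _
    · haveI := Fintype.ofFinite A
      obtain ⟨s, hdet⟩ := stable_inj r θ hfin hloc hrec hinj
      have hps := pattern_surj θ hrec s hdet
      have hsurj := full_surj r θ hloc hps
      set T := {i : ℤ // i ∈ Finset.Icc (-(s:ℤ)) (s:ℤ)} with hT
      set g : ℤ → (T → A) → A := fun x w =>
        if h : ∃ c : ℤ → A, ∀ i : T, nuca θ c (x + i.1) = w i then h.choose x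
        else Classical.arbitrary A with hg
      set φ : ℤ → (ℤ → A) → A := fun x u => g x (fun i => u i.1) with hφ
      have hL : ∀ c, nuca φ (nuca θ c) = c := by
        intro c
        funext x
        have hex : ∃ c' : ℤ → A, ∀ i : T,
            nuca θ c' (x + i.1) = nuca θ c (x + i.1) := ⟨c, fun i => rfl⟩
        show g x (fun i => nuca θ c (x + i.1)) = c x
        simp only [hg]
        rw [dif_pos hex]
        apply hdet x
        intro y hy
        rw [Finset.mem_Icc] at hy
        have hmem : (y - x) ∈ Finset.Icc (-(s:ℤ)) (s:ℤ) := by rw [Finset.mem_Icc]; omega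
        have := hex.choose_spec ⟨y - x, hmem⟩
        simp only [] at this
        have hyx : x + (y - x) = y := by ring
        rw [hyx] at this
        exact this
      refine ⟨s, φ, ?_, ?_, hL, ?_⟩
      · have hsub : Set.range φ ⊆
            (fun (Gg : (T → A) → A) => (fun u : ℤ → A => Gg (fun i => u i.1))) '' Set.range g := by
          rintro f ⟨x, rfl⟩
          exact ⟨g x, ⟨x, rfl⟩, rfl⟩
        exact Set.Finite.subset (Set.Finite.image _ (Set.toFinite (Set.range g))) hsub
      · intro x u v huv
        have harg : (fun i : T => u i.1) = (fun i : T => v i.1) := by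
          funext i
          have hi := i.2
          rw [Finset.mem_Icc] at hi
          exact huv i.1 hi.1 hi.2
        show g x (fun i => u i.1) = g x (fun i => v i.1)
        rw [harg]
      · intro c
        obtain ⟨c₀, hc₀⟩ := hsurj c
        rw [← hc₀, hL c₀]
end

section
/- There exists a finite alphabet Σ, a finite rule set R, and a recurrent rule distribution θ ∈ R^ℤ such that the non-uniform cellular automaton H_θ is bijective but not reversible (no NUCA with a finite rule set is its inverse). -/
open Function

/-- membership in balanced base-5 numbers with at most `n` digits -/
def InB : ℕ → ℤ → Prop
  | 0 => fun x => x = 0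
  | n+1 => fun x => ∃ d y, (d = -1 ∨ d = 0 ∨ d = 1) ∧ x = 5*y + d ∧ InB n y

def Bset (x : ℤ) : Prop := ∃ n, InB n x

def Sset (x : ℤ) : Prop := ∃ b, Bset b ∧ x = 2*b

lemma inB_zero : ∀ n, InB n (0:ℤ)
  | 0 => rfl
  | n+1 => ⟨0, 0, by tauto, by ring, inB_zero n⟩

lemma inB_bound : ∀ (n : ℕ) (x : ℤ), InB n x → 4 * |x| + 1 ≤ 5^n := by
  intro n
  induction n with
  | zero => intro x hx; simp [InB] at hx; simp [hx]
  | succ n ih =>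
    rintro x ⟨d, y, hd, rfl, hy⟩
    have h1 := ih y hy
    have h2 : |5*y + d| ≤ 5*|y| + 1 := by
      calc |5*y + d| ≤ |5*y| + |d| := abs_add_le _ _
        _ ≤ 5*|y| + 1 := by rw [abs_mul]; rcases hd with h|h|h <;> simp [h]
    have : (5:ℤ)^(n+1) = 5 * 5^n := by ring
    nlinarith

lemma inB_succ {n : ℕ} {x : ℤ} (h : InB n x) : InB (n+1) x := by
  induction n generalizing x with
  | zero => simp [InB] at h; exact h ▸ inB_zero 1
  | succ n ih =>
    obtain ⟨d, y, hd, rfl, hy⟩ := h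
    exact ⟨d, y, hd, rfl, ih hy⟩

lemma inB_mono {n m : ℕ} (h : n ≤ m) {x : ℤ} (hx : InB n x) : InB m x := by
  induction m with
  | zero => have : n = 0 := by omega
            exact this ▸ hx
  | succ m ih =>
    rcases Nat.lt_or_ge n (m+1) with h'|h'
    · exact inB_succ (ih (by omega))
    · have : n = m+1 := by omega
      exact this ▸ hx

lemma digit_bound {d y : ℤ} {k : ℕ} (hd : d = -1 ∨ d = 0 ∨ d = 1)
    (h : 4*|5*y+d| + 1 ≤ 5^(k+1)) : 4*|y| + 1 ≤ 5^k := by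
  have hdle : |d| ≤ 1 := by rcases hd with h|h|h <;> simp [h]
  have h5 : 5*|y| ≤ |5*y+d| + 1 := by
    have habs := abs_sub (5*y+d) d
    have e2 : 5*y + d - d = 5*y := by ring
    rw [e2] at habs
    have e3 : |5*y| = 5*|y| := by rw [abs_mul]; norm_num
    linarith
  obtain ⟨t, ht⟩ : Odd ((5:ℤ)^k) := Odd.pow (by decide)
  have hp : (5:ℤ)^(k+1) = 5 * 5^k := by ring
  have hy0 : 0 ≤ |y| := abs_nonneg y
  have hx0 : 0 ≤ |5*y+d| := abs_nonneg _
  rw [hp, ht] at h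
  rw [ht]
  omega

lemma inB_trunc : ∀ (m : ℕ) (x : ℤ) (n : ℕ), InB m x → 4*|x| + 1 ≤ 5^n → n ≤ m → InB n x := by
  intro m
  induction m with
  | zero => intro x n hx _ hn
            have : n = 0 := by omega
            exact this ▸ hx
  | succ m ih =>
    rintro x n ⟨d, y, hd, rfl, hy⟩ hb hn
    cases n with
    | zero =>
      have : |5*y+d| = 0 := by
        have := abs_nonneg (5*y+d); simp at hb; omega
      have : 5*y+d = 0 := abs_eq_zero.mp this
      simpa [InB] using this
    | succ k =>
      have hyb : 4*|y| + 1 ≤ 5^k := digit_bound hd hb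
      exact ⟨d, y, hd, rfl, ih y k hy hyb (by omega)⟩

lemma inB_of_bound {x : ℤ} {n : ℕ} (hx : Bset x) (hb : 4*|x| + 1 ≤ 5^n) : InB n x := by
  obtain ⟨m, hm⟩ := hx
  rcases Nat.le_total n m with h|h
  · exact inB_trunc m x n hm hb h
  · exact inB_mono h hm

lemma inB_shift : ∀ (n : ℕ) (b : ℤ), InB n b → InB (n+1) (b + 5^n) := by
  intro n
  induction n with
  | zero => intro b hb
            simp [InB] at hb
            exact ⟨1, 0, by tauto, by simp [hb], inB_zero 0⟩
  | succ n ih =>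
    rintro b ⟨d, y, hd, rfl, hy⟩
    exact ⟨d, y + 5^n, hd, by ring, ih y hy⟩

lemma inB_unshift : ∀ (n : ℕ) (b : ℤ), 4*|b| + 1 ≤ 5^n → InB (n+1) (b + 5^n) → InB n b := by
  intro n
  induction n with
  | zero => intro b hb _
            have h0 := abs_nonneg b
            have : |b| = 0 := by simp at hb; omega
            simpa [InB] using abs_eq_zero.mp this
  | succ n ih =>
    rintro b hb ⟨d, y, hd, he, hy⟩
    set y' := y - 5^n with hy'
    have heb : b = 5*y' + d := by
      have : (5:ℤ)^(n+1) = 5*5^n := by ring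
      rw [hy']; omega
    have hb' : 4*|y'| + 1 ≤ 5^n := digit_bound hd (heb ▸ hb)
    have hyy : y = y' + 5^n := by omega
    exact ⟨d, y', hd, heb, ih y' hb' (hyy ▸ hy)⟩

lemma B_shift_iff {b : ℤ} {n : ℕ} (hb : 4*|b| + 1 ≤ 5^n) : Bset (b + 5^n) ↔ Bset b := by
  constructor
  · intro h
    have hbig : 4*|b + 5^n| + 1 ≤ 5^(n+1) := by
      have h1 : |b + 5^n| ≤ |b| + 5^n := by
        have := abs_add_le b (5^n)
        have : |(5:ℤ)^n| = 5^n := abs_of_nonneg (by positivity)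
        calc |b + 5^n| ≤ |b| + |(5:ℤ)^n| := abs_add_le _ _
          _ = |b| + 5^n := by rw [this]
      have : (5:ℤ)^(n+1) = 5*5^n := by ring
      nlinarith
    exact ⟨n, inB_unshift n b hb (inB_of_bound h hbig)⟩
  · intro ⟨m, hm⟩
    exact ⟨n+1, inB_shift n b (inB_of_bound ⟨m, hm⟩ hb)⟩

lemma inB_split : ∀ (n m : ℕ) (x : ℤ), InB (n + m) x →
    ∃ r y, InB n r ∧ InB m y ∧ x = r + 5^n * y := by
  intro n
  induction n with
  | zero => intro m x hx; exact ⟨0, x, rfl, by simpa using hx, by simp⟩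
  | succ n ih =>
    intro m x hx
    have : n + 1 + m = (n + m) + 1 := by omega
    rw [this] at hx
    obtain ⟨d, y1, hd, rfl, hy1⟩ := hx
    obtain ⟨r', y, hr', hy, he⟩ := ih m y1 hy1
    refine ⟨5*r' + d, y, ⟨d, r', hd, rfl, hr'⟩, hy, ?_⟩
    rw [he]; ring

lemma B_gap {b : ℤ} (hb : Bset b) (n : ℕ) : 4*b ≤ 5^n - 1 ∨ 3*5^n + 1 ≤ 4*b := by
  obtain ⟨m, hm⟩ := hb
  have hm' : InB (n + (m + n)) b := inB_mono (by omega) hm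
  obtain ⟨r, y, hr, hy, rfl⟩ := inB_split n (m+n) b hm'
  have hrb : 4*|r| + 1 ≤ 5^n := inB_bound n r hr
  have hr1 : r ≤ |r| := le_abs_self r
  have hr2 : -|r| ≤ r := neg_abs_le r
  have hpos : (0:ℤ) < 5^n := by positivity
  rcases le_or_gt y 0 with h|h
  · left; nlinarith
  · right
    have : 1 ≤ y := h
    nlinarith

lemma pow5_unbounded (z : ℤ) : ∃ n : ℕ, z ≤ 5^n := by
  rcases le_or_gt z 0 with h|h
  · exact ⟨0, by omega⟩
  · refine ⟨z.toNat, ?_⟩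
    have h1 : z.toNat < 5 ^ z.toNat := Nat.lt_pow_self (by norm_num)
    have h2 : (z.toNat : ℤ) < (5:ℤ)^z.toNat := by exact_mod_cast h1
    omega

lemma S_even {x : ℤ} (h : Sset x) : ∃ b, x = 2*b := by
  obtain ⟨b, _, rfl⟩ := h; exact ⟨b, rfl⟩

lemma S_shift {x : ℤ} {n : ℕ} (h : 2*|x| + 1 ≤ 5^n) : Sset (x + 2*5^n) ↔ Sset x := by
  constructor
  · rintro ⟨b', hb', he⟩
    have hxb : x = 2*(b' - 5^n) := by omega
    refine ⟨b' - 5^n, ?_, hxb⟩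
    have habs : 2 * |b' - 5^n| = |x| := by
      rw [hxb, abs_mul]; norm_num
    have hbd : 4*|b' - 5^n| + 1 ≤ 5^n := by omega
    have : b' - 5^n + 5^n = b' := by ring
    exact (B_shift_iff hbd).mp (by rwa [this])
  · rintro ⟨b, hb, rfl⟩
    have habs : 2*|b| = |2*b| := by rw [abs_mul]; norm_num
    have hbd : 4*|b| + 1 ≤ 5^n := by omega
    exact ⟨b + 5^n, (B_shift_iff hbd).mpr hb, by ring⟩

lemma not_S_gap {x : ℤ} {n : ℕ} (h1 : 5^n + 1 ≤ 2*x) (h2 : 2*x ≤ 3*5^n - 1) : ¬ Sset x := by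
  rintro ⟨b, hb, rfl⟩
  rcases B_gap hb n with h|h <;> omega

lemma S_exists_ge (x : ℤ) : ∃ d : ℕ, Sset (x + d) := by
  obtain ⟨n, hn⟩ := pow5_unbounded x
  refine ⟨(2*5^n - x).toNat, ?_⟩
  have hp0 : (0:ℤ) < 5^n := by positivity
  have hle : x ≤ 2*5^n := by omega
  have : x + ((2*5^n - x).toNat : ℤ) = 2*5^n := by omega
  rw [this]
  exact ⟨5^n, ⟨n+1, by simpa using inB_shift n 0 (inB_zero n)⟩, rfl⟩

attribute [local instance] Classical.propDecidable

noncomputable def Nx (x : ℤ) : ℤ := x + Nat.find (S_exists_ge x)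

lemma Nx_S (x : ℤ) : Sset (Nx x) := Nat.find_spec (S_exists_ge x)

lemma Nx_le (x : ℤ) : x ≤ Nx x := by
  have : (0:ℤ) ≤ (Nat.find (S_exists_ge x) : ℤ) := Int.ofNat_nonneg _
  unfold Nx; omega

lemma Nx_min {x y : ℤ} (h1 : x ≤ y) (h2 : y < Nx x) : ¬ Sset y := by
  have hd : ((y - x).toNat : ℤ) = y - x := Int.toNat_of_nonneg (by omega)
  have hlt : (y - x).toNat < Nat.find (S_exists_ge x) := by unfold Nx at h2; omega
  have := Nat.find_min (S_exists_ge x) hlt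
  intro hS
  exact this (by rwa [hd, show x + (y - x) = y by ring])

lemma Nx_eq {x m : ℤ} (hm : Sset m) (h1 : x ≤ m) (h2 : ∀ y, x ≤ y → y < m → ¬ Sset y) :
    Nx x = m := by
  rcases lt_trichotomy (Nx x) m with h|h|h
  · exact absurd (Nx_S x) (h2 _ (Nx_le x) h)
  · exact h
  · exact absurd hm (Nx_min h1 h)

lemma Nx_self {x : ℤ} (h : Sset x) : Nx x = x :=
  Nx_eq h le_rfl (fun y h1 h2 => by omega)

lemma Nx_succ {x : ℤ} (h : ¬ Sset x) : Nx (x+1) = Nx x := by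
  refine Nx_eq (Nx_S x) ?_ (fun y h1 h2 => Nx_min (by omega) h2)
  have := Nx_le x
  rcases this.lt_or_eq with h'|h'
  · omega
  · exact absurd (h' ▸ Nx_S x) h

noncomputable def theta : ℤ → ((ℤ → ZMod 2) → ZMod 2) :=
  fun x => if Sset x then (fun b => b 0) else (fun b => b 0 + b 1)

lemma zmod2_add_self : ∀ a : ZMod 2, a + a = 0 := by decide

lemma theta_S {x : ℤ} (h : Sset x) (c : ℤ → ZMod 2) : nuca theta c x = c x := by
  simp [nuca, theta, if_pos h]

lemma theta_nS {x : ℤ} (h : ¬ Sset x) (c : ℤ → ZMod 2) :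
    nuca theta c x = c x + c (x+1) := by
  simp [nuca, theta, if_neg h]

noncomputable def Phi (d : ℤ → ZMod 2) (x : ℤ) : ZMod 2 := ∑ y ∈ Finset.Icc x (Nx x), d y

lemma Icc_insert (x b : ℤ) (h : x ≤ b) :
    Finset.Icc x b = insert x (Finset.Icc (x+1) b) := by
  ext y
  simp only [Finset.mem_Icc, Finset.mem_insert]
  omega

lemma sum_H (c : ℤ → ZMod 2) : ∀ (k : ℕ) (x : ℤ),
    (∀ y, x ≤ y → y < x + k → ¬ Sset y) → Sset (x + k) →
    ∑ y ∈ Finset.Icc x (x + (k:ℤ)), nuca theta c y = c x := by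
  intro k
  induction k with
  | zero =>
    intro x _ hS
    simp only [Nat.cast_zero, add_zero] at hS ⊢
    rw [Finset.Icc_self, Finset.sum_singleton, theta_S hS]
  | succ k ih =>
    intro x hgap hS
    push_cast at hS hgap ⊢
    have hx : ¬ Sset x := hgap x le_rfl (by omega)
    rw [Icc_insert x _ (by omega), Finset.sum_insert (by simp), theta_nS hx]
    have hrec : ∑ y ∈ Finset.Icc (x+1) (x+1+(k:ℤ)), nuca theta c y = c (x+1) := by
      apply ih (x+1) (fun y h1 h2 => hgap y (by omega) (by omega))
      rw [show x + 1 + ((k:ℕ):ℤ) = x + ((k:ℤ)+1) from by ring]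
      exact hS
    rw [show x + ((k:ℤ)+1) = x+1+(k:ℤ) from by ring, hrec, add_assoc,
      zmod2_add_self _, add_zero]

lemma Phi_left (c : ℤ → ZMod 2) (x : ℤ) : Phi (nuca theta c) x = c x := by
  have hk : x + (((Nx x - x).toNat : ℕ) : ℤ) = Nx x := by
    have := Nx_le x; omega
  have key := sum_H c (Nx x - x).toNat x
    (fun y h1 h2 => Nx_min h1 (by omega)) (by rw [hk]; exact Nx_S x)
  unfold Phi
  rw [← hk]
  exact key

lemma Phi_right (d : ℤ → ZMod 2) (x : ℤ) : nuca theta (Phi d) x = d x := by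
  by_cases h : Sset x
  · rw [theta_S h]
    unfold Phi
    rw [Nx_self h, Finset.Icc_self, Finset.sum_singleton]
  · rw [theta_nS h]
    have h1 : x + 1 ≤ Nx x := by
      have h2 := Nx_le x
      rcases h2.lt_or_eq with h'|h'
      · omega
      · exact absurd (h' ▸ Nx_S x) h
    have : Phi d x = d x + Phi d (x+1) := by
      unfold Phi
      rw [Nx_succ h, Icc_insert x (Nx x) (Nx_le x), Finset.sum_insert (by simp)]
    rw [this, add_assoc, zmod2_add_self _, add_zero]

lemma theta_range_finite : (Set.range theta).Finite := by
  apply Set.Finite.subset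
    ((Set.finite_singleton (fun b : ℤ → ZMod 2 => b 0 + b 1)).insert (fun b => b 0))
  rintro _ ⟨x, rfl⟩
  by_cases h : Sset x <;> simp [theta, h]

lemma theta_local : ∀ x, IsLocalRule 1 (theta x) := by
  intro x u v huv
  have h0 := huv 0 (by norm_num) (by norm_num)
  have h1 := huv 1 (by norm_num) (by norm_num)
  by_cases h : Sset x <;> simp [theta, h, h0, h1]

lemma theta_recurrent : Recurrent theta := by
  intro a m
  obtain ⟨n, hn⟩ := pow5_unbounded (2*(|a| + m) + 1)
  have hp0 : (0:ℤ) < 5^n := by positivity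
  refine ⟨2*5^n, by positivity, fun i hi => ?_⟩
  have hxb : 2*|a + i| + 1 ≤ 5^n := by
    have h1 : |a + (i:ℤ)| ≤ |a| + i := by
      calc |a + (i:ℤ)| ≤ |a| + |(i:ℤ)| := abs_add_le _ _
        _ = |a| + i := by rw [abs_of_nonneg (Int.natCast_nonneg i)]
    have h2 : (i:ℤ) < m := by exact_mod_cast hi
    omega
  have hiff := S_shift (x := a + i) hxb
  have he : a + 2*5^n + i = (a + i) + 2*5^n := by ring
  unfold theta
  rw [he]
  by_cases h : Sset (a + i)
  · rw [if_pos h, if_pos (hiff.mpr h)]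
  · rw [if_neg h, if_neg (fun hc => h (hiff.mp hc))]

lemma theta_bijective : Function.Bijective (nuca theta) := by
  apply Function.bijective_iff_has_inverse.mpr
  exact ⟨Phi, fun c => funext (Phi_left c), fun d => funext (Phi_right d)⟩

lemma theta_not_reversible :
    ¬ ∃ (s : ℕ) (φ : ℤ → ((ℤ → ZMod 2) → ZMod 2)), (Set.range φ).Finite ∧
        (∀ x, IsLocalRule s (φ x)) ∧
        (∀ c, nuca φ (nuca theta c) = c) ∧ (∀ c, nuca theta (nuca φ c) = c) := by
  rintro ⟨s, φ, -, hloc, hli, -⟩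
  obtain ⟨n, hn⟩ := pow5_unbounded (2*(s:ℤ) + 1)
  set t : ℤ := 5^n with ht
  have hp0 : (0:ℤ) < t := by positivity
  -- configurations
  set c' : ℤ → ZMod 2 := fun y => if t - s ≤ y ∧ y ≤ t + s + 1 then 1 else 0 with hc'
  have hgap : ∀ y : ℤ, t - s ≤ y → y ≤ t + s → ¬ Sset y := by
    intro y h1 h2
    exact not_S_gap (n := n) (by omega) (by omega)
  have himg : ∀ y : ℤ, t - s ≤ y → y ≤ t + s → nuca theta c' y = 0 := by
    intro y h1 h2
    rw [theta_nS (hgap y h1 h2)]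
    have e1 : c' y = 1 := by simp only [hc']; rw [if_pos (by omega)]
    have e2 : c' (y+1) = 1 := by simp only [hc']; rw [if_pos (by omega)]
    rw [e1, e2]; decide
  have hzero : ∀ y : ℤ, nuca theta (fun _ => (0 : ZMod 2)) y = 0 := by
    intro y
    by_cases h : Sset y
    · rw [theta_S h]
    · rw [theta_nS h]; decide
  have heq : nuca φ (nuca theta c') t = nuca φ (nuca theta (fun _ => 0)) t := by
    show φ t _ = φ t _
    apply hloc t
    intro i hi1 hi2
    rw [himg (t+i) (by omega) (by omega), hzero]
  rw [hli c', hli (fun _ => 0)] at heq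
  have : c' t = 1 := by simp only [hc']; rw [if_pos (by omega)]
  rw [this] at heq
  exact one_ne_zero heq

/-- There is a finite alphabet, finite rule set and recurrent rule distribution whose
NUCA is bijective but not reversible (no finite-rule-set NUCA is its inverse). -/
theorem stmt_3 :
    ∃ (A : Type) (_ : Fintype A) (r : ℕ) (θ : ℤ → ((ℤ → A) → A)),
      (Set.range θ).Finite ∧ (∀ x, IsLocalRule r (θ x)) ∧ Recurrent θ ∧
      Function.Bijective (nuca θ) ∧
      ¬ ∃ (s : ℕ) (φ : ℤ → ((ℤ → A) → A)), (Set.range φ).Finite ∧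
          (∀ x, IsLocalRule s (φ x)) ∧
          (∀ c, nuca φ (nuca θ c) = c) ∧ (∀ c, nuca θ (nuca φ c) = c) :=
  ⟨ZMod 2, inferInstance, 1, theta, theta_range_finite, theta_local, theta_recurrent,
    theta_bijective, theta_not_reversible⟩
end

section
/- Let Σ = ℤ/2 with radius-1 rules f_R(a,b,c) = b⊕c, f_L(a,b,c) = a⊕b, g(a,b,c) = b, and let θ ∈ {f_L,f_R,g}^ℤ be any distribution in which every cell with rule f_R has, finitely many steps to its right, a cell with rule g with only f_R in between, and symmetrically every f_L cell has a g cell finitely to its left with only f_L in between. Then the NUCA H_θ is injective. -/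
open Function

/-- The local rule f_L(a,b,c) = a ⊕ b. -/
def fL : (ℤ → ZMod 2) → ZMod 2 := fun u => u (-1) + u 0

/-- The local rule f_R(a,b,c) = b ⊕ c. -/
def fR : (ℤ → ZMod 2) → ZMod 2 := fun u => u 0 + u 1

/-- The local rule g(a,b,c) = b. -/
def gId : (ℤ → ZMod 2) → ZMod 2 := fun u => u 0

/-- If every f_R cell has a g cell finitely many steps to its right with only f_R in
between, and symmetrically every f_L cell has a g cell finitely to its left with only
f_L in between, then the NUCA is injective. -/
theorem stmt_4 (θ : ℤ → ((ℤ → ZMod 2) → ZMod 2))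
    (hrules : ∀ x, θ x = fL ∨ θ x = fR ∨ θ x = gId)
    (hR : ∀ x, θ x = fR → ∃ k : ℕ, 0 < k ∧ θ (x + (k : ℤ)) = gId ∧
      ∀ i : ℕ, i < k → θ (x + (i : ℤ)) = fR)
    (hL : ∀ x, θ x = fL → ∃ k : ℕ, 0 < k ∧ θ (x - (k : ℤ)) = gId ∧
      ∀ i : ℕ, i < k → θ (x - (i : ℤ)) = fL) :
    Function.Injective (nuca θ) := by
  intro c d h
  funext x
  by_contra hx
  rcases hrules x with hθ | hθ | hθ
  · -- fL case
    obtain ⟨k, hk, hg, hfl⟩ := hL x hθ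
    have key : ∀ i : ℕ, i ≤ k → c (x - (i : ℤ)) ≠ d (x - (i : ℤ)) := by
      intro i
      induction i with
      | zero => intro _; simpa using hx
      | succ n ih =>
        intro hle
        have hn : n < k := by omega
        have hθn := hfl n hn
        have hc := congrFun h (x - (n : ℤ))
        simp only [nuca, hθn, fL] at hc
        have e1 : x - (n : ℤ) + (-1) = x - ((n + 1 : ℕ) : ℤ) := by push_cast; ring
        have e2 : x - (n : ℤ) + 0 = x - (n : ℤ) := by ring
        rw [e1, e2] at hc
        intro heq
        rw [heq] at hc
        exact ih (by omega) (add_left_cancel hc)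
    have hc := congrFun h (x - (k : ℤ))
    simp only [nuca, hg, gId] at hc
    have e2 : x - (k : ℤ) + 0 = x - (k : ℤ) := by ring
    rw [e2] at hc
    exact key k le_rfl hc
  · -- fR case
    obtain ⟨k, hk, hg, hfr⟩ := hR x hθ
    have key : ∀ i : ℕ, i ≤ k → c (x + (i : ℤ)) ≠ d (x + (i : ℤ)) := by
      intro i
      induction i with
      | zero => intro _; simpa using hx
      | succ n ih =>
        intro hle
        have hn : n < k := by omega
        have hθn := hfr n hn
        have hc := congrFun h (x + (n : ℤ))
        simp only [nuca, hθn, fR] at hc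
        have e1 : x + (n : ℤ) + 1 = x + ((n + 1 : ℕ) : ℤ) := by push_cast; ring
        have e2 : x + (n : ℤ) + 0 = x + (n : ℤ) := by ring
        rw [e1, e2] at hc
        intro heq
        rw [heq] at hc
        exact ih (by omega) (add_right_cancel hc)
    have hc := congrFun h (x + (k : ℤ))
    simp only [nuca, hg, gId] at hc
    have e2 : x + (k : ℤ) + 0 = x + (k : ℤ) := by ring
    rw [e2] at hc
    exact key k le_rfl hc
  · -- gId case
    have hc := congrFun h x
    simp only [nuca, hθ, gId] at hc
    have e2 : x + (0 : ℤ) = x := by ring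
    rw [e2] at hc
    exact hx hc
end

section
/- Let θ be a uniformly recurrent rule distribution over a finite rule set R₁, and suppose H_θ is reversible with inverse H_φ for some rule distribution φ over a rule set R₂ containing no two distinct identical rules (rules that compute the same function after padding to a common radius). Then φ is uniformly recurrent. -/
open Function

/-- If a reversible NUCA has a uniformly recurrent rule distribution, then the rule
distribution of its inverse NUCA is also uniformly recurrent. (Rules are encoded as
the functions they compute, so two identical rules are literally equal.) -/
theorem stmt_5 {A : Type*} [Finite A] (r s : ℕ)
    (θ φ : ℤ → ((ℤ → A) → A))
    (hfinθ : (Set.range θ).Finite) (hlocθ : ∀ x, IsLocalRule r (θ x))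
    (hrec : UnifRecurrent θ)
    (hfinφ : (Set.range φ).Finite) (hlocφ : ∀ x, IsLocalRule s (φ x))
    (hinv1 : ∀ c, nuca φ (nuca θ c) = c) (hinv2 : ∀ c, nuca θ (nuca φ c) = c) :
    UnifRecurrent φ := by

  have key : ∀ x y : ℤ, (∀ j : ℤ, -(s:ℤ) ≤ j → j ≤ (s:ℤ) → θ (y + j) = θ (x + j)) →
      φ y = φ x := by
    intro x y h
    funext u
    set c : ℤ → A := nuca φ (fun z => u (z - x)) with hcdef
    have hθc : nuca θ c = fun z => u (z - x) := hinv2 _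
    have hx : φ x u = c x := by
      have hu : u = fun i => nuca θ c (x + i) := by
        funext i; rw [hθc]; simp
      rw [hu]
      have h1 := congrFun (hinv1 c) x
      simpa [nuca] using h1
    have hy : φ y u = c x := by
      set c' : ℤ → A := fun z => c (z - y + x) with hc'def
      have h1 : φ y u = φ y (fun i => nuca θ c' (y + i)) := by
        apply hlocφ y
        intro i hi1 hi2
        have hθ' : θ (y + i) = θ (x + i) := h i hi1 hi2
        show u i = nuca θ c' (y + i)
        have h2 : nuca θ c' (y + i) = nuca θ c (x + i) := by
          simp only [nuca, hθ', hc'def]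
          congr 1
          funext j
          congr 1
          ring
        rw [h2, hθc]; simp
      rw [h1]
      have h3 := congrFun (hinv1 c') y
      have h2 : φ y (fun i => nuca θ c' (y + i)) = c' y := by
        simpa [nuca] using h3
      rw [h2]; simp [hc'def]
    rw [hy, hx]
  intro a m
  obtain ⟨n, hn⟩ := hrec (a - s) (m + 2 * s)
  refine ⟨n, fun x => ?_⟩
  obtain ⟨k, hk1, hk2, hk3⟩ := hn (x - s)
  refine ⟨k + s, by linarith, by linarith, ?_⟩
  intro i hi
  apply key
  intro j hj1 hj2
  have hjn : (0:ℤ) ≤ (i:ℤ) + s + j := by linarith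
  have ht : ((i:ℤ) + s + j).toNat < m + 2 * s := by omega
  have h4 := hk3 ((i:ℤ) + s + j).toNat ht
  have h5 : ((((i:ℤ) + s + j).toNat : ℕ) : ℤ) = (i:ℤ) + s + j := Int.toNat_of_nonneg hjn
  rw [h5] at h4
  have e1 : k + s + (i:ℤ) + j = k + ((i:ℤ) + s + j) := by ring
  have e2 : a + (i:ℤ) + j = a - s + ((i:ℤ) + s + j) := by ring
  rw [e1, e2]
  exact h4
end

section
/- There exists a finite alphabet Σ, a finite rule set, and a rule distribution θ such that the non-uniform cellular automaton H_θ is surjective (and pre-injective) but not balanced. -/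
open Function

/-- The rule f(a,b,c) = a ⊕ b ⊕ c. -/
def fXor : (ℤ → ZMod 2) → ZMod 2 := fun u => u (-1) + u 0 + u 1

/-- The rule g(a,b,c) = max(b,c). -/
def gMax : (ℤ → ZMod 2) → ZMod 2 := fun u => if u 0 = 1 ∨ u 1 = 1 then 1 else 0

/-- The rule distribution with g at the origin and f elsewhere. -/
def θ6 : ℤ → ((ℤ → ZMod 2) → ZMod 2) := fun x => if x = 0 then gMax else fXor

/- ------------------ auxiliary material ------------------ -/

lemma nuca_ne (c : ℤ → ZMod 2) (x : ℤ) (hx : x ≠ 0) :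
    nuca θ6 c x = c (x + -1) + c (x + 0) + c (x + 1) := by
  simp [nuca, θ6, fXor, hx]

lemma nuca_zero (c : ℤ → ZMod 2) :
    nuca θ6 c 0 = if c 0 = 1 ∨ c 1 = 1 then 1 else 0 := by
  simp [nuca, θ6, gMax]

def posSeq (d : ℤ → ZMod 2) : ℕ → ZMod 2 × ZMod 2
  | 0 => (d 0, 0)
  | n + 1 => ((posSeq d n).2, d ((n : ℤ) + 1) - (posSeq d n).1 - (posSeq d n).2)

def negSeq (d : ℤ → ZMod 2) : ℕ → ZMod 2 × ZMod 2
  | 0 => (0, d 0)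
  | n + 1 => (d (-((n : ℤ) + 1)) - (negSeq d n).1 - (negSeq d n).2, (negSeq d n).1)

def cSol (d : ℤ → ZMod 2) : ℤ → ZMod 2 :=
  fun x => if 0 ≤ x then (posSeq d x.toNat).1 else (negSeq d ((-x).toNat - 1)).1

lemma cSol_nat (d : ℤ → ZMod 2) (n : ℕ) : cSol d (n : ℤ) = (posSeq d n).1 := by
  simp [cSol]

lemma cSol_neg (d : ℤ → ZMod 2) (n : ℕ) :
    cSol d (-((n : ℤ) + 1)) = (negSeq d n).1 := by
  have h : ¬ (0 : ℤ) ≤ -((n : ℤ) + 1) := by omega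
  rw [cSol]
  rw [if_neg h]
  have : (-(-((n : ℤ) + 1))).toNat - 1 = n := by omega
  rw [this]

lemma negSeq_snd (d : ℤ → ZMod 2) (n : ℕ) :
    (negSeq d n).2 = cSol d (-(n : ℤ)) := by
  cases n with
  | zero => simp [negSeq, cSol, posSeq]
  | succ m =>
      have : -((m + 1 : ℕ) : ℤ) = -((m : ℤ) + 1) := by push_cast; ring
      rw [this, cSol_neg]
      rfl

lemma ifZMod (v : ZMod 2) : (if v = 1 ∨ (0 : ZMod 2) = 1 then (1 : ZMod 2) else 0) = v := by
  revert v; decide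

lemma cSol_spec (d : ℤ → ZMod 2) : nuca θ6 (cSol d) = d := by
  funext x
  cases x with
  | ofNat n =>
      cases n with
      | zero =>
          show nuca θ6 (cSol d) 0 = d 0
          rw [nuca_zero]
          have h0 : cSol d 0 = d 0 := by
            have := cSol_nat d 0; simpa [posSeq] using this
          have h1 : cSol d 1 = 0 := by
            have := cSol_nat d 1; simpa [posSeq] using this
          rw [h0, h1, ifZMod]
      | succ n =>
          have hco : (Int.ofNat (n + 1)) = ((n : ℤ) + 1) := by
            show ((n + 1 : ℕ) : ℤ) = (n : ℤ) + 1
            push_cast; ring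
          rw [hco]
          have hx : ((n : ℤ) + 1) ≠ 0 := by omega
          rw [nuca_ne _ _ hx]
          have e1 : (n : ℤ) + 1 + -1 = (n : ℤ) := by ring
          have e2 : (n : ℤ) + 1 + 0 = ((n + 1 : ℕ) : ℤ) := by push_cast; ring
          have e3 : (n : ℤ) + 1 + 1 = ((n + 2 : ℕ) : ℤ) := by push_cast; ring
          rw [e1, e2, e3, cSol_nat, cSol_nat, cSol_nat]
          show (posSeq d n).1 + (posSeq d (n + 1)).1 + (posSeq d (n + 2)).1 = d ((n : ℤ) + 1)
          simp only [posSeq]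
          ring
  | negSucc n =>
      rw [Int.negSucc_eq]
      have hx : (-((n : ℤ) + 1)) ≠ 0 := by omega
      rw [nuca_ne _ _ hx]
      have e1 : -((n : ℤ) + 1) + -1 = -(((n + 1 : ℕ) : ℤ) + 1) := by push_cast; ring
      have e2 : -((n : ℤ) + 1) + 0 = -((n : ℤ) + 1) := by ring
      have e3 : -((n : ℤ) + 1) + 1 = -(n : ℤ) := by ring
      rw [e1, e2, e3, cSol_neg, cSol_neg, ← negSeq_snd]
      show (negSeq d (n + 1)).1 + (negSeq d n).1 + (negSeq d n).2 = d (-((n : ℤ) + 1))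
      simp only [negSeq]
      ring

lemma surj6 : Function.Surjective (nuca θ6) := fun d => ⟨cSol d, cSol_spec d⟩

lemma preinj6 : ∀ c e : ℤ → ZMod 2, {x | c x ≠ e x}.Finite →
    nuca θ6 c = nuca θ6 e → c = e := by
  intro c e hfin heq
  by_contra hne
  set S := hfin.toFinset with hS
  have hmem : ∀ y : ℤ, c y ≠ e y ↔ y ∈ S := by
    intro y; simp [hS]
  have hSne : S.Nonempty := by
    by_contra h
    apply hne
    funext y
    by_contra hy
    exact h ⟨y, (hmem y).1 hy⟩
  have key : ∀ x : ℤ, x ≠ 0 →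
      c (x + -1) + c (x + 0) + c (x + 1) = e (x + -1) + e (x + 0) + e (x + 1) := by
    intro x hx
    have := congrFun heq x
    rwa [nuca_ne c x hx, nuca_ne e x hx] at this
  rcases lt_or_ge (S.min' hSne) 0 with hmin | hmin
  · -- minimum is negative; look at x = min - 1 ≤ -2
    set m := S.min' hSne with hm
    have hx : m - 1 ≠ 0 := by omega
    have h1 : c (m - 1 + -1) = e (m - 1 + -1) := by
      by_contra h
      have := S.min'_le _ ((hmem _).1 h)
      omega
    have h2 : c (m - 1 + 0) = e (m - 1 + 0) := by
      by_contra h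
      have := S.min'_le _ ((hmem _).1 h)
      omega
    have hk := key (m - 1) hx
    have h3 : c (m - 1 + 1) = e (m - 1 + 1) := by linear_combination hk - h1 - h2
    have hmm : m - 1 + 1 = m := by ring
    rw [hmm] at h3
    exact (hmem m).mpr (S.min'_mem hSne) h3
  · -- minimum is ≥ 0, so maximum M ≥ 0; look at x = M + 1 ≥ 1
    set M := S.max' hSne with hM
    have hM0 : 0 ≤ M := le_trans hmin (S.min'_le _ (S.max'_mem hSne))
    have hx : M + 1 ≠ 0 := by omega
    have h2 : c (M + 1 + 0) = e (M + 1 + 0) := by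
      by_contra h
      have := S.le_max' _ ((hmem _).1 h)
      omega
    have h3 : c (M + 1 + 1) = e (M + 1 + 1) := by
      by_contra h
      have := S.le_max' _ ((hmem _).1 h)
      omega
    have hk := key (M + 1) hx
    have h1 : c (M + 1 + -1) = e (M + 1 + -1) := by linear_combination hk - h2 - h3
    have hmm : (M : ℤ) + 1 + -1 = M := by ring
    rw [hmm] at h1
    exact (hmem M).mpr (S.max'_mem hSne) h1

/- not balanced -/

lemma nbhd_zero : nbhd 1 ({0} : Finset ℤ) = Finset.Icc (-1) 1 := by
  simp [nbhd]

lemma mem_m1 : (-1 : ℤ) ∈ nbhd 1 ({0} : Finset ℤ) := by rw [nbhd_zero]; decide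
lemma mem_0 : (0 : ℤ) ∈ nbhd 1 ({0} : Finset ℤ) := by rw [nbhd_zero]; decide
lemma mem_1 : (1 : ℤ) ∈ nbhd 1 ({0} : Finset ℤ) := by rw [nbhd_zero]; decide

def Q6 (a b c : ZMod 2) : { y : ℤ // y ∈ nbhd 1 ({0} : Finset ℤ) } → ZMod 2 :=
  fun y => if y.1 = -1 then a else if y.1 = 0 then b else c

lemma Q6_m1 (a b c : ZMod 2) : Q6 a b c ⟨-1, mem_m1⟩ = a := by simp [Q6]
lemma Q6_0 (a b c : ZMod 2) : Q6 a b c ⟨0, mem_0⟩ = b := by norm_num [Q6]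
lemma Q6_1 (a b c : ZMod 2) : Q6 a b c ⟨1, mem_1⟩ = c := by norm_num [Q6]

abbrev P6 (q : { y : ℤ // y ∈ nbhd 1 ({0} : Finset ℤ) } → ZMod 2) : Prop :=
  ∀ c : ℤ → ZMod 2, (∀ i : { y : ℤ // y ∈ nbhd 1 ({0} : Finset ℤ) }, c i.1 = q i) →
    ∀ x ∈ ({0} : Finset ℤ), nuca θ6 c x = (fun _ => (1 : ZMod 2)) x

lemma Q6_sat (a b c : ZMod 2) (h : b = 1 ∨ c = 1) : P6 (Q6 a b c) := by
  intro f hf x hx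
  have hx0 : x = 0 := by simpa using hx
  subst hx0
  rw [nuca_zero]
  have h0 : f 0 = b := by rw [hf ⟨0, mem_0⟩, Q6_0]
  have h1 : f 1 = c := by rw [hf ⟨1, mem_1⟩, Q6_1]
  rw [h0, h1, if_pos h]

def T6 : Fin 5 → ZMod 2 × ZMod 2 × ZMod 2 :=
  ![(0, 0, 1), (0, 1, 0), (0, 1, 1), (1, 0, 1), (1, 1, 0)]

lemma T6_sat : ∀ i : Fin 5, (T6 i).2.1 = 1 ∨ (T6 i).2.2 = 1 := by decide

lemma T6_inj : Function.Injective T6 := by decide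

def F6 : Fin 5 → {q : { y : ℤ // y ∈ nbhd 1 ({0} : Finset ℤ) } → ZMod 2 // P6 q} :=
  fun i => ⟨Q6 (T6 i).1 (T6 i).2.1 (T6 i).2.2, Q6_sat _ _ _ (T6_sat i)⟩

lemma F6_inj : Function.Injective F6 := by
  intro i j h
  have h' : Q6 (T6 i).1 (T6 i).2.1 (T6 i).2.2 = Q6 (T6 j).1 (T6 j).2.1 (T6 j).2.2 :=
    congrArg Subtype.val h
  apply T6_inj
  have e1 := congrFun h' ⟨-1, mem_m1⟩
  have e2 := congrFun h' ⟨0, mem_0⟩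
  have e3 := congrFun h' ⟨1, mem_1⟩
  rw [Q6_m1, Q6_m1] at e1
  rw [Q6_0, Q6_0] at e2
  rw [Q6_1, Q6_1] at e3
  exact Prod.ext e1 (Prod.ext e2 e3)

lemma notbal6 : ¬ NucaBalanced 1 θ6 := by
  intro hB
  have hc3 : (nbhd 1 ({0} : Finset ℤ)).card = 3 := by
    rw [nbhd_zero]; decide
  have hrhs : Fintype.card (ZMod 2) ^
      ((nbhd 1 ({0} : Finset ℤ)).card - ({0} : Finset ℤ).card) = 4 := by
    rw [hc3, Finset.card_singleton]; decide
  have h4 : Nat.card {q : { y : ℤ // y ∈ nbhd 1 ({0} : Finset ℤ) } → ZMod 2 // P6 q} = 4 := by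
    exact (hB ({0} : Finset ℤ) (fun _ => (1 : ZMod 2))).trans hrhs
  have hle := Nat.card_le_card_of_injective F6 F6_inj
  rw [h4, Nat.card_eq_fintype_card, Fintype.card_fin] at hle
  omega

/-- There is a NUCA (the one above) which is surjective and pre-injective but not
balanced. -/
theorem stmt_6 :
    Function.Surjective (nuca θ6) ∧
    (∀ c e : ℤ → ZMod 2, {x | c x ≠ e x}.Finite → nuca θ6 c = nuca θ6 e → c = e) ∧
    ¬ NucaBalanced 1 θ6 := by
  exact ⟨surj6, preinj6, notbal6⟩
end

section
/- Let θ ∈ R^ℤ be a recurrent rule distribution (every finite pattern of θ occurs at least twice, equivalently infinitely often) over a finite rule set R of local rules on a finite alphabet Σ with |Σ| = s. If the non-uniform cellular automaton H_θ is surjective, then H_θ is balanced: for every finite domain D ⊆ ℤ and every pattern p ∈ Σ^D, the number of patterns q ∈ Σ^(N_θ(D)) with H_{θ|D}(q) = p equals s^(|N_θ(D)|−|D|). -/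
open Function
set_option linter.unusedSectionVars false
set_option linter.unusedVariables false
set_option linter.unusedTactic false
set_option maxHeartbeats 1000000


namespace Stmt7

variable {A : Type*} [Fintype A]

noncomputable def ext [Nonempty A] (E : Finset ℤ) (q : {y : ℤ // y ∈ E} → A) : ℤ → A :=
  fun y => if h : y ∈ E then q ⟨y, h⟩ else Classical.arbitrary A

lemma ext_mem [Nonempty A] {E : Finset ℤ} (q : {y : ℤ // y ∈ E} → A) {y : ℤ} (h : y ∈ E) :
    ext E q y = q ⟨y, h⟩ := dif_pos h

noncomputable def Cnt [Nonempty A] (θ : ℤ → ((ℤ → A) → A)) (E D : Finset ℤ) (p : ℤ → A) : ℕ :=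
  Nat.card {q : {y : ℤ // y ∈ E} → A // ∀ x ∈ D, nuca θ (ext E q) x = p x}

lemma mem_nbhd {r : ℕ} {D : Finset ℤ} {x y : ℤ} (hx : x ∈ D) (h1 : x - r ≤ y) (h2 : y ≤ x + r) :
    y ∈ nbhd r D := Finset.mem_biUnion.2 ⟨x, hx, Finset.mem_Icc.2 ⟨h1, h2⟩⟩

lemma subset_nbhd {r : ℕ} {D : Finset ℤ} : D ⊆ nbhd r D :=
  fun x hx => mem_nbhd hx (by omega) (by omega)

lemma nbhd_mono {r : ℕ} {D D' : Finset ℤ} (h : D ⊆ D') : nbhd r D ⊆ nbhd r D' :=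
  Finset.biUnion_subset_biUnion_of_subset_left _ h

lemma nbhd_union {r : ℕ} (D₁ D₂ : Finset ℤ) :
    nbhd r (D₁ ∪ D₂) = nbhd r D₁ ∪ nbhd r D₂ := by
  ext y; simp [nbhd, Finset.mem_biUnion, or_and_right, exists_or]

lemma nbhd_biUnion {r : ℕ} (s : Finset ℕ) (g : ℕ → Finset ℤ) :
    nbhd r (s.biUnion g) = s.biUnion (fun j => nbhd r (g j)) :=
  Finset.biUnion_biUnion s g _

lemma nbhd_Ico {r n : ℕ} (hn : 1 ≤ n) (a : ℤ) :
    nbhd r (Finset.Ico a (a + n)) = Finset.Ico (a - r) (a + n + r) := by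
  ext y
  simp only [nbhd, Finset.mem_biUnion, Finset.mem_Ico, Finset.mem_Icc]
  constructor
  · rintro ⟨x, ⟨h1, h2⟩, h3, h4⟩; omega
  · rintro ⟨h1, h2⟩
    refine ⟨if y < a then a else if y ≤ a + (n : ℤ) - 1 then y else a + n - 1, ?_⟩
    split_ifs <;> omega

variable {r : ℕ} {θ : ℤ → ((ℤ → A) → A)}

lemma nuca_local (hloc : ∀ x, IsLocalRule r (θ x)) (c c' : ℤ → A) (x : ℤ)
    (h : ∀ y, x - r ≤ y → y ≤ x + r → c y = c' y) : nuca θ c x = nuca θ c' x :=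
  hloc x _ _ (fun i h1 h2 => h (x + i) (by omega) (by omega))

lemma nuca_ext_eq [Nonempty A] (hloc : ∀ x, IsLocalRule r (θ x)) {E F : Finset ℤ} (hEF : E ⊆ F)
    (q : {y : ℤ // y ∈ F} → A) {x : ℤ} (hx : ∀ y : ℤ, x - r ≤ y → y ≤ x + r → y ∈ E) :
    nuca θ (ext F q) x = nuca θ (ext E (fun i => q ⟨i.1, hEF i.2⟩)) x := by
  apply nuca_local hloc
  intro y h1 h2
  have hE := hx y h1 h2
  rw [ext_mem _ (hEF hE), ext_mem _ hE]

def splitEquiv {E F : Finset ℤ} (hEF : E ⊆ F) :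
    ({y : ℤ // y ∈ F} → A) ≃ ({y : ℤ // y ∈ E} → A) × ({y : ℤ // y ∈ F \ E} → A) where
  toFun q := (fun i => q ⟨i.1, hEF i.2⟩, fun j => q ⟨j.1, (Finset.mem_sdiff.1 j.2).1⟩)
  invFun uw y := if hy : y.1 ∈ E then uw.1 ⟨y.1, hy⟩ else uw.2 ⟨y.1, Finset.mem_sdiff.2 ⟨y.2, hy⟩⟩
  left_inv q := by
    funext y; dsimp only; split_ifs <;> rfl
  right_inv uw := by
    refine Prod.ext ?_ ?_ <;> funext i <;> dsimp only
    · rw [dif_pos i.2]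
    · rw [dif_neg (Finset.mem_sdiff.1 i.2).2]

def fstSubtypeEquiv {α β : Type*} (P : α → Prop) : {x : α × β // P x.1} ≃ {a // P a} × β where
  toFun x := (⟨x.1.1, x.2⟩, x.1.2)
  invFun y := ⟨(y.1.1, y.2), y.1.2⟩
  left_inv x := rfl
  right_inv y := rfl

lemma card_restrict_pred {E F : Finset ℤ} (hEF : E ⊆ F) (P : ({y : ℤ // y ∈ E} → A) → Prop) :
    Nat.card {q : {y : ℤ // y ∈ F} → A // P (fun i => q ⟨i.1, hEF i.2⟩)} =
    Nat.card {q' : {y : ℤ // y ∈ E} → A // P q'} * Fintype.card A ^ (F.card - E.card) := by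
  have e1 : {q : {y : ℤ // y ∈ F} → A // P (fun i => q ⟨i.1, hEF i.2⟩)} ≃
      {x : ({y : ℤ // y ∈ E} → A) × ({y : ℤ // y ∈ F \ E} → A) // P x.1} :=
    Equiv.subtypeEquiv (splitEquiv hEF) (fun q => Iff.rfl)
  rw [Nat.card_congr (e1.trans (fstSubtypeEquiv P)), Nat.card_prod]
  congr 1
  rw [Nat.card_fun, Nat.card_eq_fintype_card, Nat.card_eq_fintype_card, Fintype.card_coe,
    Finset.card_sdiff_of_subset hEF]


variable [Nonempty A]

lemma Cnt_congr {E D : Finset ℤ} {p p' : ℤ → A} (h : ∀ x ∈ D, p x = p' x) :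
    Cnt θ E D p = Cnt θ E D p' :=
  Nat.card_congr (Equiv.subtypeEquivRight (fun q =>
    ⟨fun hq x hx => (hq x hx).trans (h x hx), fun hq x hx => (hq x hx).trans (h x hx).symm⟩))

lemma Cnt_env (hloc : ∀ x, IsLocalRule r (θ x)) {E F D : Finset ℤ} (hEF : E ⊆ F)
    (hD : nbhd r D ⊆ E) (p : ℤ → A) :
    Cnt θ F D p = Cnt θ E D p * Fintype.card A ^ (F.card - E.card) := by
  have key : ∀ q : {y : ℤ // y ∈ F} → A,
      (∀ x ∈ D, nuca θ (ext F q) x = p x) ↔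
      (∀ x ∈ D, nuca θ (ext E (fun i => q ⟨i.1, hEF i.2⟩)) x = p x) := by
    intro q
    refine forall₂_congr (fun x hx => ?_)
    rw [nuca_ext_eq hloc hEF q (fun y h1 h2 => hD (mem_nbhd hx h1 h2))]
  exact (Nat.card_congr (Equiv.subtypeEquivRight key)).trans
    (card_restrict_pred hEF (fun q' => ∀ x ∈ D, nuca θ (ext E q') x = p x))

lemma Cnt_pos (hloc : ∀ x, IsLocalRule r (θ x)) (hsurj : Surjective (nuca θ))
    {E D : Finset ℤ} (hE : nbhd r D ⊆ E) (p : ℤ → A) : 1 ≤ Cnt θ E D p := by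
  obtain ⟨c, hc⟩ := hsurj p
  have hq : ∀ x ∈ D, nuca θ (ext E (fun i : {y : ℤ // y ∈ E} => c i.1)) x = p x := by
    intro x hx
    have : nuca θ (ext E (fun i : {y : ℤ // y ∈ E} => c i.1)) x = nuca θ c x := by
      apply nuca_local hloc
      intro y h1 h2
      rw [ext_mem _ (hE (mem_nbhd hx h1 h2))]
    rw [this, hc]
  have : Nonempty {q : {y : ℤ // y ∈ E} → A // ∀ x ∈ D, nuca θ (ext E q) x = p x} :=
    ⟨⟨fun i => c i.1, hq⟩⟩
  exact Nat.card_pos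

lemma Cnt_sum (D : Finset ℤ) :
    ∑ v : {y : ℤ // y ∈ D} → A, Cnt θ (nbhd r D) D (ext D v) =
      Fintype.card A ^ (nbhd r D).card := by
  classical
  set N := nbhd r D with hN
  have key : ∀ v : {y : ℤ // y ∈ D} → A, Cnt θ N D (ext D v) =
      (Finset.univ.filter fun q : {y : ℤ // y ∈ N} → A =>
        (fun x : {y : ℤ // y ∈ D} => nuca θ (ext N q) x.1) = v).card := by
    intro v
    rw [Cnt, Nat.card_eq_fintype_card, Fintype.card_subtype]
    congr 1
    apply Finset.filter_congr
    intro q _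
    constructor
    · intro hq
      funext x
      rw [hq x.1 x.2, ext_mem _ x.2]
    · intro hq x hx
      have := congrFun hq ⟨x, hx⟩
      dsimp at this
      rw [this, ext_mem _ hx]
  rw [Finset.sum_congr rfl (fun v _ => key v)]
  have h2 := Finset.card_eq_sum_card_fiberwise
    (f := fun q : {y : ℤ // y ∈ N} → A => fun x : {y : ℤ // y ∈ D} => nuca θ (ext N q) x.1)
    (s := Finset.univ) (t := Finset.univ) (fun q _ => Finset.mem_univ _)
  rw [← h2, Finset.card_univ, Fintype.card_fun, Fintype.card_coe]


def glueEquiv {E F : Finset ℤ} (h : Disjoint E F) :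
    ({y : ℤ // y ∈ E ∪ F} → A) ≃ ({y : ℤ // y ∈ E} → A) × ({y : ℤ // y ∈ F} → A) where
  toFun q := (fun i => q ⟨i.1, Finset.mem_union_left _ i.2⟩,
              fun j => q ⟨j.1, Finset.mem_union_right _ j.2⟩)
  invFun uw y := if hy : y.1 ∈ E then uw.1 ⟨y.1, hy⟩
    else uw.2 ⟨y.1, (Finset.mem_union.1 y.2).resolve_left hy⟩
  left_inv q := by funext y; dsimp only; split_ifs <;> rfl
  right_inv uw := by
    refine Prod.ext ?_ ?_ <;> funext i <;> dsimp only
    · rw [dif_pos i.2]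
    · rw [dif_neg (Finset.disjoint_right.1 h i.2)]

lemma Cnt_mul (hloc : ∀ x, IsLocalRule r (θ x)) {D₁ D₂ : Finset ℤ}
    (h : Disjoint (nbhd r D₁) (nbhd r D₂)) (p : ℤ → A) :
    Cnt θ (nbhd r D₁ ∪ nbhd r D₂) (D₁ ∪ D₂) p =
      Cnt θ (nbhd r D₁) D₁ p * Cnt θ (nbhd r D₂) D₂ p := by
  set N₁ := nbhd r D₁
  set N₂ := nbhd r D₂
  have key : ∀ q : {y : ℤ // y ∈ N₁ ∪ N₂} → A,
      (∀ x ∈ D₁ ∪ D₂, nuca θ (ext (N₁ ∪ N₂) q) x = p x) ↔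
      ((∀ x ∈ D₁, nuca θ (ext N₁ ((glueEquiv h q).1)) x = p x) ∧
       (∀ x ∈ D₂, nuca θ (ext N₂ ((glueEquiv h q).2)) x = p x)) := by
    intro q
    have e1 : ∀ x ∈ D₁, nuca θ (ext (N₁ ∪ N₂) q) x = nuca θ (ext N₁ ((glueEquiv h q).1)) x :=
      fun x hx => nuca_ext_eq hloc Finset.subset_union_left q
        (fun y h1 h2 => mem_nbhd hx h1 h2)
    have e2 : ∀ x ∈ D₂, nuca θ (ext (N₁ ∪ N₂) q) x = nuca θ (ext N₂ ((glueEquiv h q).2)) x :=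
      fun x hx => nuca_ext_eq hloc Finset.subset_union_right q
        (fun y h1 h2 => mem_nbhd hx h1 h2)
    constructor
    · intro hq
      exact ⟨fun x hx => (e1 x hx).symm.trans (hq x (Finset.mem_union_left _ hx)),
             fun x hx => (e2 x hx).symm.trans (hq x (Finset.mem_union_right _ hx))⟩
    · rintro ⟨h1, h2⟩ x hx
      rcases Finset.mem_union.1 hx with hx1 | hx2
      · exact (e1 x hx1).trans (h1 x hx1)
      · exact (e2 x hx2).trans (h2 x hx2)
  have e3 := (Equiv.subtypeEquiv (glueEquiv h) key).trans
    (Equiv.subtypeProdEquivProd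
      (p := fun u => ∀ x ∈ D₁, nuca θ (ext N₁ u) x = p x)
      (q := fun w => ∀ x ∈ D₂, nuca θ (ext N₂ w) x = p x))
  exact (Nat.card_congr e3).trans (Nat.card_prod _ _)

lemma Cnt_prod (hloc : ∀ x, IsLocalRule r (θ x)) (g : ℕ → Finset ℤ) (p : ℤ → A) :
    ∀ m : ℕ, (∀ j j', j < m → j' < m → j ≠ j' → Disjoint (nbhd r (g j)) (nbhd r (g j'))) →
    Cnt θ (nbhd r ((Finset.range m).biUnion g)) ((Finset.range m).biUnion g) p =
      ∏ j ∈ Finset.range m, Cnt θ (nbhd r (g j)) (g j) p := by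
  intro m
  induction m with
  | zero =>
    intro _
    rw [Finset.range_zero, show (∅ : Finset ℕ).biUnion g = ∅ from Finset.biUnion_empty,
      Finset.prod_empty]
    have h0 : nbhd r (∅ : Finset ℤ) = ∅ := Finset.biUnion_empty
    rw [Cnt, h0]
    have e : {q : {y : ℤ // y ∈ (∅ : Finset ℤ)} → A //
        ∀ x ∈ (∅ : Finset ℤ), nuca θ (ext ∅ q) x = p x} ≃
        ({y : ℤ // y ∈ (∅ : Finset ℤ)} → A) :=
      Equiv.subtypeUnivEquiv (fun q => by simp)
    refine (Nat.card_congr e).trans ?_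
    rw [Nat.card_fun]
    simp
  | succ m ih =>
    intro hdisj
    rw [Finset.range_add_one, Finset.biUnion_insert, Finset.prod_insert Finset.notMem_range_self]
    have hd : Disjoint (nbhd r (g m)) (nbhd r ((Finset.range m).biUnion g)) := by
      rw [nbhd_biUnion, Finset.disjoint_biUnion_right]
      intro j hj
      exact hdisj m j (Nat.lt_succ_self m) (Nat.lt_succ_of_lt (Finset.mem_range.1 hj))
        (Nat.ne_of_gt (Finset.mem_range.1 hj))
    rw [nbhd_union, Cnt_mul hloc hd p,
      ih (fun j j' hj hj' hne => hdisj j j' (Nat.lt_succ_of_lt hj) (Nat.lt_succ_of_lt hj') hne)]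

section Rec
variable {R : Type*}

variable {R : Type*}

lemma far_occ {θ : ℤ → R} (hrec : Recurrent θ) (a' : ℤ) (L B : ℕ) :
    ∃ u : ℤ, (B : ℤ) ≤ |u - a'| ∧ ∀ i : ℕ, i < L → θ (u + i) = θ (a' + i) := by
  rcases Nat.eq_zero_or_pos B with hB | hB
  · exact ⟨a', by simp [hB], fun i _ => rfl⟩
  set B' : ℕ := B + L with hB'
  set M : ℕ := L + 2 * B' with hM
  obtain ⟨k, hk0, hk⟩ := hrec (a' - B') M
  have step : ∀ y : ℤ, a' - B' ≤ y → y < a' - B' + M → θ (y + k) = θ y := by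
    intro y h1 h2
    have hi : ((y - (a' - B')).toNat : ℤ) = y - (a' - B') := Int.toNat_of_nonneg (by omega)
    have hilt : (y - (a' - B')).toNat < M := by omega
    have := hk _ hilt
    rw [show a' - B' + k + ((y - (a' - B')).toNat : ℤ) = y + k by omega,
      show a' - B' + ((y - (a' - B')).toNat : ℤ) = y by omega] at this
    exact this
  have hkpos : 1 ≤ k.natAbs := by omega
  have hPB : B ≤ B * k.natAbs := Nat.le_mul_of_pos_right B (by omega)
  have hex : ∃ j, B ≤ j * k.natAbs := ⟨B, hPB⟩
  set j₀ : ℕ := Nat.find hex with hj₀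
  have hj₀spec : B ≤ j₀ * k.natAbs := Nat.find_spec hex
  have hj₀min : ∀ j < j₀, j * k.natAbs < B := fun j hj =>
    Nat.lt_of_not_le (Nat.find_min hex hj)
  have claim : ∀ j : ℕ, j ≤ j₀ → ∀ i : ℕ, i < L → θ (a' + j * k + i) = θ (a' + i) := by
    intro j
    induction j with
    | zero => intro _ i _; norm_num
    | succ j ih =>
      intro hj i hi
      have hjlt : j * k.natAbs < B := hj₀min j (by omega)
      have habs : ((j * k.natAbs : ℕ) : ℤ) = |(j : ℤ) * k| := by
        rw [abs_mul, Int.abs_natCast, Int.abs_eq_natAbs]; push_cast; ring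
      have hrange : a' - B' ≤ a' + j * k + i ∧ a' + j * k + i < a' - B' + M := by
        have h1 : |(j : ℤ) * k| < B := by omega
        have h2 : -(B : ℤ) < (j : ℤ) * k ∧ (j : ℤ) * k < B := abs_lt.1 h1
        constructor <;> push_cast <;> omega
      have := step (a' + j * k + i) hrange.1 hrange.2
      rw [show a' + j * k + i + k = a' + (j + 1) * k + i by ring] at this
      rw [show ((j + 1 : ℕ) : ℤ) = (j : ℤ) + 1 by push_cast; ring]
      rw [show a' + ((j : ℤ) + 1) * k + i = a' + (j + 1) * k + i by ring, this]
      exact ih (by omega) i hi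
  refine ⟨a' + j₀ * k, ?_, fun i hi => claim j₀ le_rfl i hi⟩
  have : |a' + (j₀ : ℤ) * k - a'| = ((j₀ * k.natAbs : ℕ) : ℤ) := by
    rw [show a' + (j₀ : ℤ) * k - a' = (j₀ : ℤ) * k by ring, abs_mul, Int.abs_natCast,
      Int.abs_eq_natAbs]
    push_cast; ring
  omega

lemma occ_seq {θ : ℤ → R} (hrec : Recurrent θ) (a' : ℤ) (L : ℕ) :
    ∃ f : ℕ → ℤ, (∀ j, ∀ i : ℕ, i < L → θ (f j + i) = θ (a' + i)) ∧
      (∀ j j', j < j' → (L : ℤ) ≤ |f j' - f j|) := by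
  have H : ∀ z : ℤ, ∃ u : ℤ, ((z - a').natAbs + L : ℤ) ≤ |u - a'| ∧
      ∀ i : ℕ, i < L → θ (u + i) = θ (a' + i) := by
    intro z
    obtain ⟨u, h1, h2⟩ := far_occ hrec a' L ((z - a').natAbs + L)
    exact ⟨u, by push_cast at h1 ⊢; omega, h2⟩
  choose g hg1 hg2 using H
  refine ⟨fun j => g^[j] a', ?_, ?_⟩
  · intro j
    dsimp only
    cases j with
    | zero => intro i _; rfl
    | succ j =>
      rw [Function.iterate_succ_apply']
      exact hg2 _
  · have key : ∀ j, |g^[j] a' - a'| + L ≤ |g^[j+1] a' - a'| := by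
      intro j
      rw [Function.iterate_succ_apply']
      have h := hg1 (g^[j] a')
      rw [← Int.abs_eq_natAbs] at h
      omega
    have mono : ∀ j j', j ≤ j' → |g^[j] a' - a'| ≤ |g^[j'] a' - a'| := by
      intro j j' hle
      induction j' with
      | zero => simp_all
      | succ j' ih =>
        rcases Nat.lt_or_ge j (j' + 1) with h | h
        · have := key j'
          have := ih (by omega)
          omega
        · have : j = j' + 1 := by omega
          simp [this]
    intro j j' hjj
    dsimp only
    have h1 := key j
    have h2 := mono (j + 1) j' hjj
    have h3 : |g^[j'] a' - a'| - |g^[j] a' - a'| ≤ |g^[j'] a' - g^[j] a'| := by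
      have := abs_sub_abs_le_abs_sub (g^[j'] a' - a') (g^[j] a' - a')
      rw [show g^[j'] a' - a' - (g^[j] a' - a') = g^[j'] a' - g^[j] a' by ring] at this
      omega
    omega

lemma pow_aux : ∀ (m x : ℕ), (x + (m + 1)) * x ^ m ≤ (x + 1) ^ (m + 1) := by
  intro m
  induction m with
  | zero => intro x; simp
  | succ m ih =>
    intro x
    have h1 : (x + (m + 2)) * x ^ (m + 1) ≤ ((x + (m + 1)) * x ^ m) * (x + 1) := by
      have : (x + (m + 2)) * x ≤ (x + (m + 1)) * (x + 1) := by nlinarith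
      calc (x + (m + 2)) * x ^ (m + 1) = ((x + (m + 2)) * x) * x ^ m := by ring
        _ ≤ ((x + (m + 1)) * (x + 1)) * x ^ m := Nat.mul_le_mul_right _ this
        _ = ((x + (m + 1)) * x ^ m) * (x + 1) := by ring
    calc (x + (m + 2)) * x ^ (m + 1) ≤ ((x + (m + 1)) * x ^ m) * (x + 1) := h1
      _ ≤ (x + 1) ^ (m + 1) * (x + 1) := Nat.mul_le_mul_right _ (ih x)
      _ = (x + 1) ^ (m + 2) := by ring

lemma pow_gap {t : ℕ} (ht : 2 ≤ t) : ∃ m : ℕ, 1 ≤ m ∧ t * (t - 1) ^ m < t ^ m := by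
  obtain ⟨x, rfl⟩ : ∃ x, t = x + 1 := ⟨t - 1, by omega⟩
  have hx : 1 ≤ x := by omega
  refine ⟨x * x + 1, by omega, ?_⟩
  have h1 := pow_aux (x * x) x
  have hxpow : 1 ≤ x ^ (x * x) := Nat.one_le_pow _ _ (by omega)
  have h2 : (x + 1) * x ^ (x * x + 1) < (x + (x * x + 1)) * x ^ (x * x) := by
    have hp : x ^ (x * x + 1) = x ^ (x * x) * x := pow_succ x (x * x)
    nlinarith [hxpow]
  have h3 : (x + 1) - 1 = x := by omega
  rw [h3]
  omega

end Rec

section Shift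
variable {A : Type*} [Fintype A] [Nonempty A] {r : ℕ} {θ : ℤ → ((ℤ → A) → A)}

lemma Cnt_shift (hloc : ∀ x, IsLocalRule r (θ x)) {n : ℕ} (hn : 1 ≤ n) {a b : ℤ}
    (hocc : ∀ i : ℕ, i < n + 2 * r → θ (b + i) = θ (a - r + i)) (p : ℤ → A) :
    Cnt θ (nbhd r (Finset.Ico (b + r) (b + r + n))) (Finset.Ico (b + r) (b + r + n))
        (fun x => p (x - (b + r - a))) =
    Cnt θ (nbhd r (Finset.Ico a (a + n))) (Finset.Ico a (a + n)) p := by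
  set δ : ℤ := b + r - a with hδ
  have hNa : nbhd r (Finset.Ico a (a + n)) = Finset.Ico (a - r) (a + n + r) := nbhd_Ico hn a
  have hNb : nbhd r (Finset.Ico (b + r) (b + r + n)) =
      Finset.Ico (b + r - r) (b + r + n + r) := nbhd_Ico hn (b + r)
  rw [Cnt, Cnt, hNa, hNb]
  let e : ({y : ℤ // y ∈ Finset.Ico (b + r - r) (b + r + n + r)} → A) ≃
      ({y : ℤ // y ∈ Finset.Ico (a - r) (a + n + r)} → A) :=
    { toFun := fun q y => q ⟨y.1 + δ, by
        have := Finset.mem_Ico.1 y.2; exact Finset.mem_Ico.2 ⟨by omega, by omega⟩⟩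
      invFun := fun q' y => q' ⟨y.1 - δ, by
        have := Finset.mem_Ico.1 y.2; exact Finset.mem_Ico.2 ⟨by omega, by omega⟩⟩
      left_inv := fun q => by
        funext y; exact congrArg q (Subtype.ext (by dsimp; ring))
      right_inv := fun q' => by
        funext y; exact congrArg q' (Subtype.ext (by dsimp; ring)) }
  have claim : ∀ (q : {y : ℤ // y ∈ Finset.Ico (b + r - r) (b + r + n + r)} → A),
      ∀ x ∈ Finset.Ico a (a + (n : ℤ)),
      nuca θ (ext (Finset.Ico (a - r) (a + n + r)) (e q)) x =
      nuca θ (ext (Finset.Ico (b + r - r) (b + r + n + r)) q) (x + δ) := by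
    intro q x hx
    have hx' := Finset.mem_Ico.1 hx
    have hθx : θ (x + δ) = θ x := by
      have hi : ((x - a + r).toNat : ℤ) = x - a + r := Int.toNat_of_nonneg (by omega)
      have hilt : (x - a + r).toNat < n + 2 * r := by omega
      have h := hocc _ hilt
      rw [show b + (((x - a + r).toNat : ℕ) : ℤ) = x + δ by omega,
        show a - (r : ℤ) + (((x - a + r).toNat : ℕ) : ℤ) = x by omega] at h
      exact h
    show θ x _ = θ (x + δ) _
    rw [hθx]
    apply hloc x
    intro i h1 h2
    have hmemA : x + i ∈ Finset.Ico (a - (r : ℤ)) (a + n + r) :=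
      Finset.mem_Ico.2 ⟨by omega, by omega⟩
    have hmemB : x + δ + i ∈ Finset.Ico (b + (r : ℤ) - r) (b + r + n + r) :=
      Finset.mem_Ico.2 ⟨by omega, by omega⟩
    rw [ext_mem _ hmemA, ext_mem _ hmemB]
    exact congrArg q (Subtype.ext (by ring))
  refine Nat.card_congr (Equiv.subtypeEquiv e ?_)
  intro q
  constructor
  · intro hq x hx
    have hxb : x + δ ∈ Finset.Ico (b + (r : ℤ)) (b + r + n) := by
      have := Finset.mem_Ico.1 hx
      exact Finset.mem_Ico.2 ⟨by omega, by omega⟩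
    have h := hq (x + δ) hxb
    rw [show x + δ - δ = x by ring] at h
    rw [claim q x hx]
    exact h
  · intro hq x hx
    have hxa : x - δ ∈ Finset.Ico a (a + (n : ℤ)) := by
      have := Finset.mem_Ico.1 hx
      exact Finset.mem_Ico.2 ⟨by omega, by omega⟩
    have h := hq (x - δ) hxa
    rw [claim q (x - δ) hxa, show x - δ + δ = x by ring] at h
    exact h

end Shift

section Main
variable {A : Type*} [Fintype A] [Nonempty A] {r : ℕ} {θ : ℤ → ((ℤ → A) → A)}

lemma force_eq {ι : Type*} [Fintype ι] (g : ι → ℕ) (B : ℕ) (h1 : ∀ i, B ≤ g i)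
    (h2 : ∑ i, g i = Fintype.card ι * B) : ∀ i, g i = B := by
  by_contra hc
  push_neg at hc
  obtain ⟨i0, hi0⟩ := hc
  have hlt : Fintype.card ι * B < ∑ i, g i := by
    have := Finset.sum_lt_sum (s := Finset.univ) (f := fun _ : ι => B) (g := g)
      (fun i _ => h1 i) ⟨i0, Finset.mem_univ _, lt_of_le_of_ne (h1 i0) (Ne.symm hi0)⟩
    simpa [Finset.sum_const, Finset.card_univ, mul_comm] using this
  omega

lemma LBI (hloc : ∀ x, IsLocalRule r (θ x)) (hrec : Recurrent θ)
    (hsurj : Function.Surjective (nuca θ)) :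
    ∀ (a : ℤ) (n : ℕ), 1 ≤ n → ∀ p : ℤ → A,
    Fintype.card A ^ (2 * r) ≤
      Cnt θ (nbhd r (Finset.Ico a (a + n))) (Finset.Ico a (a + n)) p := by
  by_contra hcon
  push_neg at hcon
  obtain ⟨a, n, hn, p, hdef⟩ := hcon
  set s := Fintype.card A with hs
  have hspos : 0 < s := Fintype.card_pos
  set t := s ^ (2 * r) with ht
  have hcnt1 : 1 ≤ Cnt θ (nbhd r (Finset.Ico a (a + n))) (Finset.Ico a (a + n)) p :=
    Cnt_pos hloc hsurj (subset_refl _) p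
  have ht2 : 2 ≤ t := by omega
  obtain ⟨m, hm1, hmlt⟩ := pow_gap ht2
  set L := n + 2 * r with hL
  obtain ⟨f, hoccs, hgap⟩ := occ_seq hrec (a - r) L
  set Dj : ℕ → Finset ℤ := fun j => Finset.Ico (f j + r) (f j + r + n) with hDj
  have hNjeq : ∀ j, nbhd r (Dj j) = Finset.Ico (f j) (f j + (L : ℤ)) := by
    intro j
    rw [show (Dj j : Finset ℤ) = Finset.Ico (f j + (r : ℤ)) (f j + r + n) from rfl,
      nbhd_Ico hn]
    congr 1 <;> push_cast <;> omega
  have hNdisj : ∀ j j', j ≠ j' → Disjoint (nbhd r (Dj j)) (nbhd r (Dj j')) := by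
    have key : ∀ u v : ℕ, u < v → Disjoint (nbhd r (Dj u)) (nbhd r (Dj v)) := by
      intro u v huv
      rw [hNjeq u, hNjeq v, Finset.disjoint_left]
      intro z hz hz'
      have h := hgap u v huv
      rw [Finset.mem_Ico] at hz hz'
      rcases abs_cases (f v - f u) with ⟨heq, _⟩ | ⟨heq, _⟩ <;> omega
    intro j j' hne
    rcases Nat.lt_or_ge j j' with h | h
    · exact key j j' h
    · exact (key j' j (by omega)).symm
  have hDdisj : ∀ j j', j ≠ j' → Disjoint (Dj j) (Dj j') := fun j j' hne =>
    Finset.disjoint_of_subset_left subset_nbhd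
      (Finset.disjoint_of_subset_right subset_nbhd (hNdisj j j' hne))
  set D' : Finset ℤ := (Finset.range m).biUnion Dj with hD'
  have hPex : ∃ P : ℤ → A, ∀ j ∈ Finset.range m, ∀ x ∈ Dj j,
      P x = p (x - (f j + r - a)) := by
    refine ⟨fun x => if h : ∃ j, j ∈ Finset.range m ∧ x ∈ Dj j
      then p (x - (f h.choose + r - a)) else p 0, ?_⟩
    intro j hj x hx
    have hex : ∃ j', j' ∈ Finset.range m ∧ x ∈ Dj j' := ⟨j, hj, hx⟩
    have hch : hex.choose = j := by
      by_contra hne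
      exact Finset.disjoint_left.1 (hDdisj _ _ hne) hex.choose_spec.2 hx
    simp only []
    rw [dif_pos hex, hch]
  obtain ⟨P, hPval⟩ := hPex
  have hshift : ∀ j ∈ Finset.range m, Cnt θ (nbhd r (Dj j)) (Dj j) P =
      Cnt θ (nbhd r (Finset.Ico a (a + n))) (Finset.Ico a (a + n)) p := by
    intro j hj
    rw [Cnt_congr (fun x hx => hPval j hj x hx)]
    exact Cnt_shift hloc hn (fun i hi => hoccs j i hi) p
  have hprod : Cnt θ (nbhd r D') D' P ≤ (t - 1) ^ m := by
    rw [hD', Cnt_prod hloc Dj P m (fun j j' _ _ hne => hNdisj j j' hne)]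
    have heq : ∏ j ∈ Finset.range m, Cnt θ (nbhd r (Dj j)) (Dj j) P =
        (Cnt θ (nbhd r (Finset.Ico a (a + n))) (Finset.Ico a (a + n)) p) ^ m := by
      rw [Finset.prod_congr rfl hshift, Finset.prod_const, Finset.card_range]
    rw [heq]
    exact Nat.pow_le_pow_left (by omega) m
  have hm0 : (Finset.range m).Nonempty := ⟨0, Finset.mem_range.2 (by omega)⟩
  set cmin := (Finset.range m).inf' hm0 f with hcmin
  set cmax := (Finset.range m).sup' hm0 f with hcmax
  have hminmax : ∀ j ∈ Finset.range m, cmin ≤ f j ∧ f j ≤ cmax := fun j hj =>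
    ⟨Finset.inf'_le f hj, Finset.le_sup' f hj⟩
  have hcc : cmin ≤ cmax := by
    obtain ⟨j, hj⟩ := hm0
    have := hminmax j hj
    omega
  set k' : ℕ := (cmax - cmin).toNat + n with hk'
  have hk1 : 1 ≤ k' := by omega
  set K := Finset.Ico (cmin + (r : ℤ)) (cmin + r + k') with hK
  have hKend : cmin + (r : ℤ) + k' = cmax + r + n := by
    rw [hk']; push_cast; omega
  have hDK : D' ⊆ K := by
    intro x hx
    obtain ⟨j, hj, hxj⟩ := Finset.mem_biUnion.1 hx
    have h1 := hminmax j hj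
    have hxj' := Finset.mem_Ico.1
      (show x ∈ Finset.Ico (f j + (r : ℤ)) (f j + r + n) from hxj)
    rw [hK, Finset.mem_Ico]
    omega
  have hNK : nbhd r K = Finset.Ico (cmin + (r : ℤ) - r) (cmin + r + k' + r) :=
    nbhd_Ico hk1 _
  have hKcard : K.card = k' := by
    rw [hK, Int.card_Ico]; omega
  have hNKcard : (nbhd r K).card = k' + 2 * r := by
    rw [hNK, Int.card_Ico]; omega
  have hDjcard : ∀ j, (Dj j).card = n := fun j => by
    rw [show (Dj j : Finset ℤ) = Finset.Ico (f j + (r : ℤ)) (f j + r + n) from rfl,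
      Int.card_Ico]; omega
  have hD'card : D'.card = m * n := by
    rw [hD', Finset.card_biUnion (fun j hj j' hj' hne => hDdisj j j' hne),
      Finset.sum_congr rfl (fun j _ => hDjcard j), Finset.sum_const, Finset.card_range,
      smul_eq_mul]
  have hNjcard : ∀ j, (nbhd r (Dj j)).card = L := fun j => by
    rw [hNjeq j, Int.card_Ico]; omega
  have hND'card : (nbhd r D').card = m * L := by
    rw [hD', nbhd_biUnion, Finset.card_biUnion (fun j hj j' hj' hne => hNdisj j j' hne),
      Finset.sum_congr rfl (fun j _ => hNjcard j), Finset.sum_const, Finset.card_range,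
      smul_eq_mul]
  have hsub1 : nbhd r D' ⊆ nbhd r K := nbhd_mono hDK
  have hupper : Cnt θ (nbhd r K) D' P =
      Cnt θ (nbhd r D') D' P * s ^ ((nbhd r K).card - (nbhd r D').card) :=
    Cnt_env hloc hsub1 (subset_refl _) P
  have hVcard : Nat.card {v : {y : ℤ // y ∈ K} → A //
      ∀ i : {y : ℤ // y ∈ D'}, v ⟨i.1, hDK i.2⟩ = P i.1} = s ^ (K.card - D'.card) := by
    rw [card_restrict_pred hDK (fun w => ∀ i : {y : ℤ // y ∈ D'}, w i = P i.1)]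
    have hiff : ∀ w : {y : ℤ // y ∈ D'} → A,
        (∀ i, w i = P i.1) ↔ w = fun i => P i.1 :=
      fun w => ⟨funext, fun h i => congrFun h i⟩
    have h1 : Nat.card {w : {y : ℤ // y ∈ D'} → A // ∀ i, w i = P i.1} = 1 := by
      refine (Nat.card_congr (Equiv.subtypeEquivRight hiff)).trans ?_
      rw [Nat.card_eq_fintype_card]
      exact Fintype.card_subtype_eq _
    rw [h1, one_mul]
  have hlow : s ^ (K.card - D'.card) ≤ Cnt θ (nbhd r K) D' P := by
    have hKpos : ∀ v : {y : ℤ // y ∈ K} → A,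
        ∃ q : {y : ℤ // y ∈ nbhd r K} → A,
          ∀ x ∈ K, nuca θ (ext (nbhd r K) q) x = ext K v x := by
      intro v
      have h1 : 0 < Cnt θ (nbhd r K) K (ext K v) :=
        Cnt_pos hloc hsurj (subset_refl _) _
      rw [Cnt] at h1
      obtain ⟨⟨q, hq⟩⟩ := (Nat.card_pos_iff.1 h1).1
      exact ⟨q, hq⟩
    choose qv hqv using hKpos
    rw [← hVcard, Cnt]
    have hmap : ∀ v : {v : {y : ℤ // y ∈ K} → A //
        ∀ i : {y : ℤ // y ∈ D'}, v ⟨i.1, hDK i.2⟩ = P i.1},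
        ∀ x ∈ D', nuca θ (ext (nbhd r K) (qv v.1)) x = P x := by
      intro v x hx
      rw [hqv v.1 x (hDK hx), ext_mem _ (hDK hx)]
      exact v.2 ⟨x, hx⟩
    apply Nat.card_le_card_of_injective (fun v => ⟨qv v.1, hmap v⟩)
    intro v v' he
    have heq : qv v.1 = qv v'.1 := congrArg Subtype.val he
    apply Subtype.ext; funext y
    have h1 := hqv v.1 y.1 y.2
    have h2 := hqv v'.1 y.1 y.2
    rw [heq] at h1
    have h3 := h1.symm.trans h2
    rw [ext_mem _ y.2, ext_mem _ y.2] at h3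
    exact h3
  have hineq : s ^ (K.card - D'.card) ≤
      (t - 1) ^ m * s ^ ((nbhd r K).card - (nbhd r D').card) := by
    calc s ^ (K.card - D'.card) ≤ Cnt θ (nbhd r K) D' P := hlow
      _ = Cnt θ (nbhd r D') D' P * s ^ ((nbhd r K).card - (nbhd r D').card) := hupper
      _ ≤ (t - 1) ^ m * s ^ ((nbhd r K).card - (nbhd r D').card) :=
          Nat.mul_le_mul_right _ hprod
  have hmnk : m * n ≤ k' := by
    have hcc2 := Finset.card_le_card hDK
    rw [hKcard, hD'card] at hcc2
    exact hcc2
  have hmLk : m * L ≤ k' + 2 * r := by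
    have hcc2 := Finset.card_le_card hsub1
    rw [hNKcard, hND'card] at hcc2
    exact hcc2
  rw [hKcard, hD'card, hNKcard, hND'card] at hineq
  have hmL : m * L = m * n + 2 * r * m := by rw [hL]; ring
  have h2r1 : 2 * r * (m - 1) + 2 * r = 2 * r * m := by
    have hmm : m - 1 + 1 = m := by clear * - hm1; omega
    calc 2 * r * (m - 1) + 2 * r = 2 * r * ((m - 1) + 1) := by ring
      _ = 2 * r * m := by rw [hmm]
  have hexp : k' - m * n = ((k' + 2 * r) - m * L) + 2 * r * (m - 1) := by
    clear * - hmnk hmLk hmL h2r1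
    omega
  rw [hexp, pow_add] at hineq
  have hpos : 0 < s ^ ((k' + 2 * r) - m * L) := pow_pos hspos _
  rw [mul_comm (s ^ ((k' + 2 * r) - m * L))] at hineq
  have hcancel : s ^ (2 * r * (m - 1)) ≤ (t - 1) ^ m :=
    Nat.le_of_mul_le_mul_right hineq hpos
  have htm : t ^ (m - 1) ≤ (t - 1) ^ m := by
    rw [pow_mul] at hcancel
    rw [← ht] at hcancel
    exact hcancel
  have h6 : t ^ m = t ^ (m - 1) * t := by
    rw [← pow_succ]
    congr 1
    clear * - hm1
    omega
  have h5 : t ^ m ≤ t * (t - 1) ^ m := by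
    rw [h6]
    calc t ^ (m - 1) * t ≤ (t - 1) ^ m * t := Nat.mul_le_mul_right t htm
      _ = t * (t - 1) ^ m := mul_comm _ _
  clear * - h5 hmlt
  omega

lemma card_pair_const {α β : Type*} [Fintype α] [Fintype β] (C1 : α → Prop)
    (C2 : α → β → Prop) (B : ℕ) (h : ∀ a, C1 a → Nat.card {b // C2 a b} = B) :
    Nat.card {w : α × β // C1 w.1 ∧ C2 w.1 w.2} = Nat.card {a // C1 a} * B := by
  classical
  have e : {w : α × β // C1 w.1 ∧ C2 w.1 w.2} ≃ Σ a : {a // C1 a}, {b // C2 a.1 b} :=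
    { toFun := fun w => ⟨⟨w.1.1, w.2.1⟩, ⟨w.1.2, w.2.2⟩⟩
      invFun := fun x => ⟨(x.1.1, x.2.1), x.1.2, x.2.2⟩
      left_inv := fun w => rfl
      right_inv := fun x => rfl }
  refine (Nat.card_congr e).trans ?_
  have h1 : Nat.card (Σ a : {a // C1 a}, {b // C2 a.1 b}) =
      ∑ a : {a // C1 a}, Nat.card {b // C2 a.1 b} := by
    simp only [Nat.card_eq_fintype_card, Fintype.card_sigma]
  rw [h1]
  calc ∑ a : {a // C1 a}, Nat.card {b // C2 a.1 b}
      = ∑ _a : {a // C1 a}, B := Finset.sum_congr rfl (fun a _ => h a.1 a.2)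
    _ = Fintype.card {a // C1 a} * B := by
        rw [Finset.sum_const, Finset.card_univ, smul_eq_mul]
    _ = Nat.card {a // C1 a} * B := by rw [Nat.card_eq_fintype_card]

lemma card_fixed_on (D F : Finset ℤ) (hDF : D ⊆ F) (p : ℤ → A) :
    Nat.card {v : {y : ℤ // y ∈ F} → A //
      ∀ i : {y : ℤ // y ∈ D}, v ⟨i.1, hDF i.2⟩ = p i.1} =
    Fintype.card A ^ (F.card - D.card) := by
  rw [card_restrict_pred hDF (fun w => ∀ i : {y : ℤ // y ∈ D}, w i = p i.1)]
  have hiff : ∀ w : {y : ℤ // y ∈ D} → A,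
      (∀ i, w i = p i.1) ↔ w = fun i => p i.1 :=
    fun w => ⟨funext, fun h i => congrFun h i⟩
  have h1 : Nat.card {w : {y : ℤ // y ∈ D} → A // ∀ i, w i = p i.1} = 1 := by
    refine (Nat.card_congr (Equiv.subtypeEquivRight hiff)).trans ?_
    rw [Nat.card_eq_fintype_card]
    exact Fintype.card_subtype_eq _
  rw [h1, one_mul]

lemma BALI (hloc : ∀ x, IsLocalRule r (θ x)) (hrec : Recurrent θ)
    (hsurj : Function.Surjective (nuca θ)) :
    ∀ (a : ℤ) (n : ℕ), 1 ≤ n → ∀ p : ℤ → A,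
    Cnt θ (nbhd r (Finset.Ico a (a + n))) (Finset.Ico a (a + n)) p =
      Fintype.card A ^ (2 * r) := by
  intro a n hn p
  classical
  set I := Finset.Ico a (a + (n : ℤ)) with hI
  have hNI : nbhd r I = Finset.Ico (a - r) (a + n + r) := nbhd_Ico hn a
  have hIcard : I.card = n := by rw [hI, Int.card_Ico]; omega
  have hNIcard : (nbhd r I).card = n + 2 * r := by rw [hNI, Int.card_Ico]; omega
  have hB : ∀ v : {y : ℤ // y ∈ I} → A,
      Fintype.card A ^ (2 * r) ≤ Cnt θ (nbhd r I) I (ext I v) := fun v =>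
    LBI hloc hrec hsurj a n hn _
  have hsum := Cnt_sum (θ := θ) (r := r) I
  have hι : Fintype.card ({y : ℤ // y ∈ I} → A) = Fintype.card A ^ n := by
    rw [Fintype.card_fun, Fintype.card_coe, hIcard]
  have h2 : ∑ v : {y : ℤ // y ∈ I} → A, Cnt θ (nbhd r I) I (ext I v) =
      Fintype.card ({y : ℤ // y ∈ I} → A) * Fintype.card A ^ (2 * r) := by
    rw [hsum, hι, ← pow_add, hNIcard]
  have force := force_eq _ _ hB h2
  have hcong : Cnt θ (nbhd r I) I p = Cnt θ (nbhd r I) I (ext I (fun i => p i.1)) :=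
    Cnt_congr (fun x hx => (ext_mem (fun i : {y : ℤ // y ∈ I} => p i.1) hx).symm)
  exact hcong.trans (force _)

lemma LB (hloc : ∀ x, IsLocalRule r (θ x)) (hrec : Recurrent θ)
    (hsurj : Function.Surjective (nuca θ)) :
    ∀ (D : Finset ℤ) (p : ℤ → A),
    Fintype.card A ^ ((nbhd r D).card - D.card) ≤ Cnt θ (nbhd r D) D p := by
  intro D p
  classical
  set s := Fintype.card A with hs
  have hspos : 0 < s := Fintype.card_pos
  rcases D.eq_empty_or_nonempty with rfl | hne
  · have h0 : nbhd r (∅ : Finset ℤ) = ∅ := Finset.biUnion_empty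
    rw [h0]
    simp only [Finset.card_empty, Nat.zero_sub, pow_zero]
    exact Cnt_pos hloc hsurj (le_of_eq h0) p
  · set a := D.min' hne with ha
    set b := D.max' hne with hb
    have hab : a ≤ b := D.min'_le _ (D.max'_mem hne)
    set n : ℕ := (b - a).toNat + 1 with hn'
    have hn : 1 ≤ n := by omega
    set I := Finset.Ico a (a + (n : ℤ)) with hI
    have hDI : D ⊆ I := by
      intro x hx
      have h1 := D.min'_le x hx
      have h2 := D.le_max' x hx
      rw [hI, Finset.mem_Ico]
      constructor
      · exact h1
      · push_cast
        omega
    have hNI : nbhd r I = Finset.Ico (a - r) (a + n + r) := nbhd_Ico hn a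
    have hIcard : I.card = n := by rw [hI, Int.card_Ico]; omega
    have hNIcard : (nbhd r I).card = n + 2 * r := by rw [hNI, Int.card_Ico]; omega
    have hNsub : nbhd r D ⊆ nbhd r I := nbhd_mono hDI
    have henv : Cnt θ (nbhd r I) D p =
        Cnt θ (nbhd r D) D p * s ^ ((nbhd r I).card - (nbhd r D).card) :=
      Cnt_env hloc hNsub (subset_refl _) p
    set NI := nbhd r I with hNIdef
    have hmap : ∀ w : {w : ({y : ℤ // y ∈ I} → A) × ({y : ℤ // y ∈ NI} → A) //
        (∀ i : {y : ℤ // y ∈ D}, w.1 ⟨i.1, hDI i.2⟩ = p i.1) ∧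
        (∀ x ∈ I, nuca θ (ext NI w.2) x = ext I w.1 x)},
        ∀ x ∈ D, nuca θ (ext NI w.1.2) x = p x := by
      intro w x hx
      rw [w.2.2 x (hDI hx), ext_mem _ (hDI hx)]
      exact w.2.1 ⟨x, hx⟩
    have hWle : Nat.card {w : ({y : ℤ // y ∈ I} → A) × ({y : ℤ // y ∈ NI} → A) //
        (∀ i : {y : ℤ // y ∈ D}, w.1 ⟨i.1, hDI i.2⟩ = p i.1) ∧
        (∀ x ∈ I, nuca θ (ext NI w.2) x = ext I w.1 x)} ≤ Cnt θ NI D p := by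
      rw [Cnt]
      refine Nat.card_le_card_of_injective (fun w => ⟨w.1.2, hmap w⟩) ?_
      intro w w' he
      have h2 : w.1.2 = w'.1.2 := congrArg Subtype.val he
      apply Subtype.ext
      refine Prod.ext ?_ h2
      funext y
      have e1 := w.2.2 y.1 y.2
      have e2 := w'.2.2 y.1 y.2
      rw [h2] at e1
      have h3 := e1.symm.trans e2
      rw [ext_mem _ y.2, ext_mem _ y.2] at h3
      exact h3
    have hWcard : Nat.card {w : ({y : ℤ // y ∈ I} → A) × ({y : ℤ // y ∈ NI} → A) //
        (∀ i : {y : ℤ // y ∈ D}, w.1 ⟨i.1, hDI i.2⟩ = p i.1) ∧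
        (∀ x ∈ I, nuca θ (ext NI w.2) x = ext I w.1 x)} =
        s ^ (I.card - D.card) * s ^ (2 * r) := by
      rw [card_pair_const
        (fun u : {y : ℤ // y ∈ I} → A => ∀ i : {y : ℤ // y ∈ D}, u ⟨i.1, hDI i.2⟩ = p i.1)
        (fun u q => ∀ x ∈ I, nuca θ (ext NI q) x = ext I u x)
        (s ^ (2 * r)) (fun u _ => BALI hloc hrec hsurj a n hn (ext I u)),
        card_fixed_on D I hDI p]
    have hle2 : s ^ (I.card - D.card) * s ^ (2 * r) ≤ Cnt θ NI D p := hWcard ▸ hWle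
    rw [henv] at hle2
    have hDle : D.card ≤ I.card := Finset.card_le_card hDI
    have hDNle : D.card ≤ (nbhd r D).card := Finset.card_le_card subset_nbhd
    have hNle : (nbhd r D).card ≤ NI.card := Finset.card_le_card hNsub
    have hexp : (I.card - D.card) + 2 * r =
        ((nbhd r D).card - D.card) + (NI.card - (nbhd r D).card) := by
      clear * - hIcard hNIcard hDle hDNle hNle
      omega
    have h8 : s ^ (I.card - D.card) * s ^ (2 * r) =
        s ^ ((nbhd r D).card - D.card) * s ^ (NI.card - (nbhd r D).card) := by
      rw [← pow_add, ← pow_add, hexp]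
    rw [h8] at hle2
    exact Nat.le_of_mul_le_mul_right hle2 (pow_pos hspos _)

end Main

end Stmt7


open Stmt7

/-- A surjective NUCA with a recurrent rule distribution over a finite rule set of
radius-`r` rules on a finite alphabet is balanced. -/
theorem stmt_7 {A : Type*} [Fintype A] (r : ℕ) (θ : ℤ → ((ℤ → A) → A))
    (hfin : (Set.range θ).Finite) (hloc : ∀ x, IsLocalRule r (θ x))
    (hrec : Recurrent θ) (hsurj : Function.Surjective (nuca θ)) :
    NucaBalanced r θ := by
  rcases isEmpty_or_nonempty A with hA | hA
  · intro D p
    exact (hA.false (p 0)).elim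
  · intro D p
    classical
    have hconv : Nat.card {q : { y : ℤ // y ∈ nbhd r D } → A //
        ∀ c : ℤ → A, (∀ i : { y : ℤ // y ∈ nbhd r D }, c i.1 = q i) →
          ∀ x ∈ D, nuca θ c x = p x} = Cnt θ (nbhd r D) D p := by
      apply Nat.card_congr
      apply Equiv.subtypeEquivRight
      intro q
      constructor
      · intro h
        exact h (ext (nbhd r D) q) (fun i => ext_mem q i.2)
      · intro h c hc x hx
        have heq : nuca θ c x = nuca θ (ext (nbhd r D) q) x := by
          apply nuca_local hloc
          intro y h1 h2
          have hm := mem_nbhd hx h1 h2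
          rw [hc ⟨y, hm⟩, ext_mem q hm]
        rw [heq]
        exact h x hx
    rw [hconv]
    have hspos : 0 < Fintype.card A := Fintype.card_pos
    have hDle : D.card ≤ (nbhd r D).card := Finset.card_le_card subset_nbhd
    have hB : ∀ v : {y : ℤ // y ∈ D} → A,
        Fintype.card A ^ ((nbhd r D).card - D.card) ≤ Cnt θ (nbhd r D) D (ext D v) :=
      fun v => LB hloc hrec hsurj D (ext D v)
    have hsum := Cnt_sum (θ := θ) (r := r) D
    have hι : Fintype.card ({y : ℤ // y ∈ D} → A) = Fintype.card A ^ D.card := by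
      rw [Fintype.card_fun, Fintype.card_coe]
    have h2 : ∑ v : {y : ℤ // y ∈ D} → A, Cnt θ (nbhd r D) D (ext D v) =
        Fintype.card ({y : ℤ // y ∈ D} → A) *
          Fintype.card A ^ ((nbhd r D).card - D.card) := by
      rw [hsum, hι, ← pow_add]
      congr 1
      exact (Nat.add_sub_cancel' hDle).symm
    have force := force_eq _ _ hB h2
    have hcong : Cnt θ (nbhd r D) D p = Cnt θ (nbhd r D) D (ext D (fun i => p i.1)) :=
      Cnt_congr (fun x hx => (ext_mem (fun i : {y : ℤ // y ∈ D} => p i.1) hx).symm)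
    rw [hcong]
    exact force _
end

section
/- Let θ ∈ R^ℤ be any rule distribution over a finite rule set such that the non-uniform cellular automaton H_θ : Σ^ℤ → Σ^ℤ is bijective. Then H_θ is balanced: for every finite domain D and every pattern p ∈ Σ^D, the number of patterns q ∈ Σ^(N_θ(D)) mapping to p under the finite-domain map equals |Σ|^(|N_θ(D)|−|D|). -/
open Function

set_option linter.unusedSectionVars false
set_option linter.unusedVariables false

namespace Stmt8

variable {A : Type*} [Fintype A]

/-- The set of patterns on the neighbourhood of `D` whose every extension maps to `w` on `D`. -/
abbrev preSet (r : ℕ) (θ : ℤ → ((ℤ → A) → A)) (D : Finset ℤ) (w : ℤ → A) :=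
  {q : { y : ℤ // y ∈ nbhd r D } → A //
    ∀ c : ℤ → A, (∀ i : { y : ℤ // y ∈ nbhd r D }, c i.1 = q i) →
      ∀ x ∈ D, nuca θ c x = w x}

/-- Patterns on the complement of the neighbourhood of `D` forcing the constant `a₀`
on all cells whose neighbourhood misses `nbhd r D`. -/
abbrev outSet (r : ℕ) (θ : ℤ → ((ℤ → A) → A)) (D : Finset ℤ) (a₀ : A) :=
  {v : { y : ℤ // y ∉ nbhd r D } → A //
    ∀ c : ℤ → A, (∀ j : { y : ℤ // y ∉ nbhd r D }, c j.1 = v j) →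
      ∀ x : ℤ, (∀ i ∈ Finset.Icc (x - (r : ℤ)) (x + (r : ℤ)), i ∉ nbhd r D) →
        nuca θ c x = a₀}

lemma mem_nbhd {r : ℕ} {D : Finset ℤ} {y : ℤ} :
    y ∈ nbhd r D ↔ ∃ x ∈ D, x - (r : ℤ) ≤ y ∧ y ≤ x + (r : ℤ) := by
  simp [nbhd, Finset.mem_Icc]

lemma subset_nbhd {r : ℕ} {D : Finset ℤ} : D ⊆ nbhd r D := fun x hx =>
  mem_nbhd.2 ⟨x, hx, by omega, by omega⟩

lemma nuca_local {r : ℕ} {θ : ℤ → ((ℤ → A) → A)} (hloc : ∀ x, IsLocalRule r (θ x))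
    (c c' : ℤ → A) (x : ℤ)
    (h : ∀ i ∈ Finset.Icc (x - (r : ℤ)) (x + (r : ℤ)), c i = c' i) :
    nuca θ c x = nuca θ c' x :=
  hloc x _ _ fun i h1 h2 => h (x + i) (Finset.mem_Icc.2 ⟨by omega, by omega⟩)

lemma key (r : ℕ) (θ : ℤ → ((ℤ → A) → A)) (hloc : ∀ x, IsLocalRule r (θ x))
    (hbij : Function.Bijective (nuca θ)) (D : Finset ℤ) (a₀ : A) (w : ℤ → A) :
    Nat.card (preSet r θ D w) * Nat.card (outSet r θ D a₀) =
      Fintype.card A ^ ((nbhd r (nbhd r D)) \ D).card := by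
  classical
  have hDE : D ⊆ nbhd r D := subset_nbhd
  have hES : nbhd r D ⊆ nbhd r (nbhd r D) := subset_nbhd
  set E := nbhd r D with hE
  set S := nbhd r (nbhd r D) with hS
  set C := S \ D with hC
  set D' : ℤ → Prop := fun x => ∀ i ∈ Finset.Icc (x - (r : ℤ)) (x + (r : ℤ)), i ∉ E with hD'
  have hSD' : ∀ x : ℤ, x ∉ S → D' x := by
    intro x hx i hi hiE
    rw [Finset.mem_Icc] at hi
    exact hx (mem_nbhd.2 ⟨i, hiE, by omega, by omega⟩)
  have hD'S : ∀ x : ℤ, x ∈ S → ¬ D' x := by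
    intro x hx hD
    obtain ⟨e, heE, h1, h2⟩ := mem_nbhd.1 hx
    exact hD e (Finset.mem_Icc.2 ⟨by omega, by omega⟩) heE
  have hD'D : ∀ x ∈ D, ¬ D' x := fun x hx => hD'S x (hES (hDE hx))
  set Y := {c : ℤ → A // (∀ x ∈ D, nuca θ c x = w x) ∧ (∀ x, D' x → nuca θ c x = a₀)} with hY
  set X := {f : ℤ → A // (∀ x ∈ D, f x = w x) ∧ (∀ x, D' x → f x = a₀)} with hX
  have e1 : Y ≃ X := Equiv.subtypeEquiv (Equiv.ofBijective _ hbij) (fun c => Iff.rfl)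
  have e2 : X ≃ ({ y : ℤ // y ∈ C } → A) := by
    refine ⟨fun f y => f.1 y.1,
      fun u => ⟨fun x => if hx : x ∈ D then w x else if hc : x ∈ C then u ⟨x, hc⟩ else a₀,
        ?_, ?_⟩, ?_, ?_⟩
    · intro x hx; simp [hx]
    · intro x hx
      have h1 : x ∉ D := fun hxD => hD'D x hxD hx
      have h2 : x ∉ C := fun hxC => hD'S x (Finset.mem_sdiff.1 hxC).1 hx
      simp [h1, h2]
    · intro f
      apply Subtype.ext
      funext x
      by_cases hx : x ∈ D
      · simp [hx, f.2.1 x hx]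
      · by_cases hc : x ∈ C
        · simp [hx, hc]
        · have hd : D' x := hSD' x (fun hxS => hc (Finset.mem_sdiff.2 ⟨hxS, hx⟩))
          simp [hx, hc, f.2.2 x hd]
    · intro u
      funext y
      have h1 : y.1 ∉ D := (Finset.mem_sdiff.1 y.2).2
      simp [h1, y.2]
  have e3 : Y ≃ (preSet r θ D w × outSet r θ D a₀) := by
    refine ⟨fun c => (⟨fun i => c.1 i.1, ?_⟩, ⟨fun j => c.1 j.1, ?_⟩),
      fun qv => ⟨fun x => if h : x ∈ E then qv.1.1 ⟨x, h⟩ else qv.2.1 ⟨x, h⟩, ?_, ?_⟩,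
      ?_, ?_⟩
    · intro c' hc' x hx
      have hcc : nuca θ c' x = nuca θ c.1 x := by
        apply nuca_local hloc
        intro i hi
        rw [Finset.mem_Icc] at hi
        exact hc' ⟨i, mem_nbhd.2 ⟨x, hx, by omega, by omega⟩⟩
      rw [hcc]; exact c.2.1 x hx
    · intro c' hc' x hx
      have hcc : nuca θ c' x = nuca θ c.1 x := by
        apply nuca_local hloc
        intro i hi
        exact hc' ⟨i, hx i hi⟩
      rw [hcc]; exact c.2.2 x hx
    · intro x hx
      exact qv.1.2 _ (fun i => dif_pos i.2) x hx
    · intro x hx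
      exact qv.2.2 _ (fun j => dif_neg j.2) x hx
    · intro c
      apply Subtype.ext
      funext x
      by_cases h : x ∈ E <;> simp [h]
    · intro qv
      apply Prod.ext
      · apply Subtype.ext
        funext i
        simp [i.2]
      · apply Subtype.ext
        funext j
        simp [show (j.1 ∉ E) from j.2]
  have h1 : Nat.card (preSet r θ D w) * Nat.card (outSet r θ D a₀) = Nat.card Y := by
    rw [← Nat.card_prod]; exact Nat.card_congr e3.symm
  have h2 : Nat.card Y = Nat.card X := Nat.card_congr e1
  have h3 : Nat.card X = Fintype.card A ^ C.card := by
    rw [Nat.card_congr e2, Nat.card_eq_fintype_card, Fintype.card_fun, Fintype.card_coe]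
  rw [h1, h2, h3]

end Stmt8

/-- Any bijective NUCA (over a finite rule set on a finite alphabet) is balanced. -/
theorem stmt_8 {A : Type*} [Fintype A] (r : ℕ) (θ : ℤ → ((ℤ → A) → A))
    (hfin : (Set.range θ).Finite) (hloc : ∀ x, IsLocalRule r (θ x))
    (hbij : Function.Bijective (nuca θ)) :
    NucaBalanced r θ := by
  intro D p
  haveI : Nonempty A := ⟨p 0⟩
  classical
  have key' := Stmt8.key r θ hloc hbij D (p 0)
  have hK : 0 < Fintype.card A ^ ((nbhd r (nbhd r D)) \ D).card :=
    pow_pos Fintype.card_pos _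
  have hpos : 0 < Nat.card (Stmt8.outSet r θ D (p 0)) := by
    rcases Nat.eq_zero_or_pos (Nat.card (Stmt8.outSet r θ D (p 0))) with h0 | h
    · exfalso
      have hp := key' p
      rw [h0, mul_zero] at hp
      omega
    · exact h
  have hall : ∀ w : ℤ → A,
      Nat.card (Stmt8.preSet r θ D w) = Nat.card (Stmt8.preSet r θ D p) := by
    intro w
    exact Nat.eq_of_mul_eq_mul_right hpos ((key' w).trans (key' p).symm)
  set m := Nat.card (Stmt8.preSet r θ D p) with hm
  set ext : ({ y : ℤ // y ∈ nbhd r D } → A) → ℤ → A :=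
    fun q z => if h : z ∈ nbhd r D then q ⟨z, h⟩ else p 0 with hext
  set φ : ({ y : ℤ // y ∈ nbhd r D } → A) → ({ x : ℤ // x ∈ D } → A) :=
    fun q x => nuca θ (ext q) x.1 with hφ
  have hfiber : ∀ b : { x : ℤ // x ∈ D } → A,
      (Finset.univ.filter fun q => φ q = b).card = m := by
    intro b
    have h1 : (Finset.univ.filter fun q => φ q = b).card
        = Fintype.card {q // φ q = b} := (Fintype.card_subtype _).symm
    rw [h1, ← Nat.card_eq_fintype_card]
    have e : {q // φ q = b} ≃
        Stmt8.preSet r θ D (fun z => if h : z ∈ D then b ⟨z, h⟩ else p 0) := by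
      apply Equiv.subtypeEquivRight
      intro q
      constructor
      · intro hq c hc x hx
        have hcc : nuca θ c x = nuca θ (ext q) x := by
          apply Stmt8.nuca_local hloc
          intro i hi
          rw [Finset.mem_Icc] at hi
          have hiE : i ∈ nbhd r D := Stmt8.mem_nbhd.2 ⟨x, hx, by omega, by omega⟩
          rw [hc ⟨i, hiE⟩]
          simp [hext, hiE]
        rw [hcc]
        have : nuca θ (ext q) x = b ⟨x, hx⟩ := by
          rw [show nuca θ (ext q) x = φ q ⟨x, hx⟩ from rfl, hq]
        rw [this]
        simp [hx]
      · intro hq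
        funext x
        have := hq (ext q) (fun i => by simp [hext, i.2]) x.1 x.2
        rw [hφ]
        simp only []
        rw [this]
        simp [x.2]
    rw [Nat.card_congr e]
    exact hall _
  have hsum : Fintype.card ({ y : ℤ // y ∈ nbhd r D } → A)
      = Fintype.card ({ x : ℤ // x ∈ D } → A) * m := by
    have := Finset.card_eq_sum_card_fiberwise
      (f := φ) (s := Finset.univ) (t := Finset.univ) (fun q _ => Finset.mem_univ (φ q))
    rw [Finset.card_univ] at this
    rw [this]
    rw [Finset.sum_congr rfl (fun b _ => hfiber b), Finset.sum_const, Finset.card_univ,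
      smul_eq_mul]
  have hcard : Fintype.card A ^ (nbhd r D).card = Fintype.card A ^ D.card * m := by
    rw [← Fintype.card_coe (nbhd r D), ← Fintype.card_coe D, ← Fintype.card_fun,
      ← Fintype.card_fun]
    exact hsum
  have hle : D.card ≤ (nbhd r D).card := Finset.card_le_card Stmt8.subset_nbhd
  have hpow : Fintype.card A ^ (nbhd r D).card
      = Fintype.card A ^ D.card * Fintype.card A ^ ((nbhd r D).card - D.card) := by
    rw [← pow_add]
    congr 1
    omega
  have hfin : m = Fintype.card A ^ ((nbhd r D).card - D.card) := by
    apply Nat.eq_of_mul_eq_mul_left (pow_pos (Fintype.card_pos (α := A)) D.card)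
    rw [← hcard, hpow]
  exact hfin
end

section
/- In the NUCA of the previous construction (traffic rule τ on positive cells, identity on nonpositive cells, Σ = {0,1}), the all-ones configuration is an equicontinuity point. -/
open Function

/-- The leftward traffic rule τ (with 1 = true, 0 = false). -/
def tau : (ℤ → Bool) → Bool := fun u =>
  if u (-1) = false ∧ u 0 = true then false
  else if u 0 = false ∧ u 1 = true then true
  else u 0

/-- The identity rule. -/
def idRule : (ℤ → Bool) → Bool := fun u => u 0

/-- Traffic on the positive cells, identity on the nonpositive cells. -/
def θtraffic : ℤ → ((ℤ → Bool) → Bool) := fun x => if 0 < x then tau else idRule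

lemma ones_fixed : nuca θtraffic (fun _ => true) = fun _ => true := by
  funext x
  unfold nuca θtraffic
  by_cases h : 0 < x <;> simp [h, tau, idRule]

lemma ones_fixed_iter (n : ℕ) :
    (nuca θtraffic)^[n] (fun _ => true) = fun _ => true := by
  induction n with
  | zero => rfl
  | succ k ih => rw [Function.iterate_succ_apply', ih, ones_fixed]

lemma step_ones (E : Finset ℤ) (e : ℤ → Bool)
    (he : ∀ x ∈ E ∪ Finset.Icc 0 ((E.sup Int.toNat : ℕ) : ℤ), e x = true) :
    ∀ x ∈ E ∪ Finset.Icc 0 ((E.sup Int.toNat : ℕ) : ℤ), nuca θtraffic e x = true := by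
  intro x hx
  unfold nuca θtraffic
  by_cases h : 0 < x
  · have hxle : x ≤ ((E.sup Int.toNat : ℕ) : ℤ) := by
      rcases Finset.mem_union.1 hx with hE | hI
      · calc x ≤ (x.toNat : ℤ) := by omega
          _ ≤ _ := by exact_mod_cast Finset.le_sup (f := Int.toNat) hE
      · exact (Finset.mem_Icc.1 hI).2
    have h1 : e (x + -1) = true := by
      apply he
      exact Finset.mem_union_right _ (Finset.mem_Icc.2 ⟨by omega, by omega⟩)
    simp [h, tau, h1, he x hx]
  · simp [h, idRule, he x hx]

/-- The all-ones configuration is an equicontinuity point of the traffic/identity NUCA. -/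
theorem stmt_10 : EqPt θtraffic (fun _ => true) := by
  intro E
  refine ⟨E ∪ Finset.Icc 0 ((E.sup Int.toNat : ℕ) : ℤ), ?_⟩
  intro e he n _ x hx
  have hiter : ∀ m : ℕ, ∀ y ∈ E ∪ Finset.Icc 0 ((E.sup Int.toNat : ℕ) : ℤ),
      (nuca θtraffic)^[m] e y = true := by
    intro m
    induction m with
    | zero => simpa using he
    | succ k ih =>
      intro y hy
      rw [Function.iterate_succ_apply']
      exact step_ones E _ ih y hy
  rw [ones_fixed_iter, hiter n x (Finset.mem_union_left _ hx)]
end
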